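/- arXiv:0902.3081 — 5 statements merged into one kernel-verified Lean document; each statement's English description precedes it below -/
import Mathlib

section
/- Let F be a rooted forest partitioned into pairwise disjoint subforests F_1,…,F_t (each F_i a union of some of the trees of F), and let I be an interval of integers partitioned into pairwise disjoint intervals I_1,…,I_t. If for each i there exists an ancestry mapping from F_i into U_k(I_i), then there exists an ancestry mapping from F into U_k(I). -/
/-- A rooted forest on a finite vertex type `V`: each vertex has an optional
parent, and the depth of a root is `1` while the depth of a child is one more
than the depth of its parent (in particular the parent relation is acyclic). -/
structure RootedForest (V : Type) [Fintype V] where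
  parent : V → Option V
  depth : V → ℕ
  depth_root : ∀ v, parent v = none → depth v = 1
  depth_parent : ∀ v u, parent v = some u → depth v = depth u + 1

/-- `u` is a (strict) ancestor of `v`: `u` lies on the path from `v` to its root. -/
def RootedForest.Ancestor {V : Type} [Fintype V] (F : RootedForest V) (u v : V) : Prop :=
  Relation.TransGen (fun a b => F.parent a = some b) v u

/-- `c_i = 1 + Σ_{j=1}^i 1/j²`. -/
def cseq (k : ℕ) : ℚ := 1 + ∑ j ∈ Finset.Icc 1 k, (1 : ℚ) / (j : ℚ) ^ 2

/-- `H_i = 1 + 3·n·d·i²/2^{i-1}`. -/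
def Hval (n d i : ℕ) : ℚ := 1 + 3 * n * d * (i : ℚ) ^ 2 / 2 ^ (i - 1)

/-- `J_i = 2·d·c_i·i²`. -/
def Jval (d i : ℕ) : ℚ := 2 * d * cseq i * (i : ℚ) ^ 2

/-- `x_0 = 1` and, for `i ≥ 1`, `x_i = ⌈2^{i-1}/(d·i²)⌉` (ceiling division). -/
def xval (d i : ℕ) : ℕ := if i = 0 then 1 else (2 ^ (i - 1) + d * i ^ 2 - 1) / (d * i ^ 2)

/-- The interval associated with a triplet: `I_{0,ν,0} = {ν}` and, for `i ≥ 1`,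
`I_{i,h,j} = [x_i·h, x_i·(h+j))`. -/
def tripInterval (d : ℕ) (t : ℕ × ℕ × ℕ) : Set ℕ :=
  if t.1 = 0 then {t.2.1}
  else Set.Ico (xval d t.1 * t.2.1) (xval d t.1 * (t.2.1 + t.2.2))

/-- `U_k(I)`: the triplets `(0,ν,0)` with `ν ∈ I`, together with the triplets
`(i,h,j)` with `1 ≤ i ≤ k`, `h ∈ [0,H_i)`, `j ∈ [1,J_i)` whose associated
interval is contained in `I`. -/
def Uset (n d k : ℕ) (I : Set ℕ) : Set (ℕ × ℕ × ℕ) :=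
  {t | (t.1 = 0 ∧ t.2.2 = 0 ∧ t.2.1 ∈ I) ∨
       (1 ≤ t.1 ∧ t.1 ≤ k ∧ ((t.2.1 : ℚ) < Hval n d t.1) ∧
        1 ≤ t.2.2 ∧ ((t.2.2 : ℚ) < Jval d t.1) ∧ tripInterval d t ⊆ I)}

lemma xval_pos (d i : ℕ) (hd : 1 ≤ d) : 0 < xval d i := by
  unfold xval
  split
  · norm_num
  · rename_i hi
    have hpos : 0 < d * i ^ 2 := by positivity
    have h1 : 1 ≤ 2 ^ (i - 1) := Nat.one_le_two_pow
    exact Nat.div_pos (by omega) hpos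

lemma Uset_nonempty_subset (n d k : ℕ) (hd : 1 ≤ d) (I : Set ℕ) (u : ℕ × ℕ × ℕ)
    (hu : u ∈ Uset n d k I) : tripInterval d u ⊆ I ∧ (tripInterval d u).Nonempty := by
  rcases hu with ⟨h0, hj, hν⟩ | ⟨h1, _, _, hj1, _, hsub⟩
  · constructor
    · simp [tripInterval, h0, Set.singleton_subset_iff, hν]
    · simp [tripInterval, h0]
  · refine ⟨hsub, ?_⟩
    have hne : u.1 ≠ 0 := by omega
    have hx := xval_pos d u.1 hd
    simp only [tripInterval, if_neg hne]
    exact ⟨xval d u.1 * u.2.1, by simp, by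
      have : u.2.1 < u.2.1 + u.2.2 := by omega
      exact (Nat.mul_lt_mul_left hx).mpr this⟩

/-- If a rooted forest `F` splits into sub-forests `P 1, …, P t` (each closed under the
parent relation), an interval `[a,b)` splits into pairwise disjoint intervals
`I 1, …, I t`, and each sub-forest admits an ancestry mapping into `U_k(I i)`,
then `F` admits an ancestry mapping into `U_k([a,b))`. -/
theorem ancestry_mapping_glue (n d k t : ℕ) (hd : 1 ≤ d)
    (V : Type) [Fintype V] (F : RootedForest V)
    (P : Fin t → Set V) (I : Fin t → Set ℕ) (a b : ℕ) (av bv : Fin t → ℕ)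
    (hpart : ∀ v : V, ∃! i : Fin t, v ∈ P i)
    (hclosed : ∀ (i : Fin t) (v u : V), F.parent v = some u → (v ∈ P i ↔ u ∈ P i))
    (hIint : ∀ i, I i = Set.Ico (av i) (bv i))
    (hIdisj : Pairwise fun i j => Disjoint (I i) (I j))
    (hIunion : (⋃ i, I i) = Set.Ico a b)
    (hmaps : ∀ i : Fin t, ∃ L : {x : V // x ∈ P i} → ℕ × ℕ × ℕ,
      (∀ x, L x ∈ Uset n d k (I i)) ∧ Function.Injective L ∧
      ∀ x y : {x : V // x ∈ P i},
        F.Ancestor x.1 y.1 ↔ tripInterval d (L y) ⊂ tripInterval d (L x)) :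
    ∃ L : V → ℕ × ℕ × ℕ,
      (∀ v, L v ∈ Uset n d k (Set.Ico a b)) ∧ Function.Injective L ∧
      ∀ u v : V, F.Ancestor u v ↔ tripInterval d (L v) ⊂ tripInterval d (L u) := by
  classical
  choose p hp hpu using hpart
  choose L hLU hLinj hLanc using hmaps
  have hIsub : ∀ i, I i ⊆ Set.Ico a b := by
    intro i
    rw [← hIunion]
    exact Set.subset_iUnion I i
  have hnesub : ∀ (i : Fin t) (x : {x : V // x ∈ P i}),
      tripInterval d (L i x) ⊆ I i ∧ (tripInterval d (L i x)).Nonempty :=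
    fun i x => Uset_nonempty_subset n d k hd _ _ (hLU i x)
  -- ancestors stay in the same part
  have hanc_part : ∀ u v : V, F.Ancestor u v → ∀ i, (v ∈ P i ↔ u ∈ P i) := by
    intro u v huv
    induction huv with
    | single h => intro i; exact hclosed i _ _ h
    | tail _ h ih => intro i; exact (ih i).trans (hclosed i _ _ h)
  have key : ∀ (i j : Fin t) (_ : i = j) (x : V) (hx : x ∈ P i) (hx' : x ∈ P j),
      L i ⟨x, hx⟩ = L j ⟨x, hx'⟩ := by
    intro i j h x hx hx'
    subst h
    rfl
  refine ⟨fun v => L (p v) ⟨v, hp v⟩, ?_, ?_, ?_⟩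
  · intro v
    have := hLU (p v) ⟨v, hp v⟩
    rcases this with ⟨h0, hj, hν⟩ | ⟨h1, h2, h3, h4, h5, h6⟩
    · exact Or.inl ⟨h0, hj, hIsub _ hν⟩
    · exact Or.inr ⟨h1, h2, h3, h4, h5, h6.trans (hIsub _)⟩
  · intro u v huv
    by_cases hpq : p u = p v
    · have hvm : v ∈ P (p u) := hpq ▸ hp v
      have : (⟨u, hp u⟩ : {x : V // x ∈ P (p u)}) = ⟨v, hvm⟩ := by
        apply hLinj (p u)
        simp only at huv
        rw [huv, key (p v) (p u) hpq.symm v (hp v) hvm]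
      simpa using congrArg Subtype.val this
    · exfalso
      have h1 := hnesub (p u) ⟨u, hp u⟩
      have h2 := hnesub (p v) ⟨v, hp v⟩
      simp only at huv
      rw [huv] at h1
      rcases h2.2 with ⟨x, hx⟩
      exact Set.disjoint_left.mp (hIdisj hpq) (h1.1 hx) (h2.1 hx)
  · intro u v
    by_cases hpq : p u = p v
    · have hvmem : v ∈ P (p u) := hpq ▸ hp v
      have := hLanc (p u) ⟨u, hp u⟩ ⟨v, hvmem⟩
      simp only at this ⊢
      rw [this, key (p v) (p u) hpq.symm v (hp v) hvmem]
    · constructor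
      · intro h
        exact absurd (hpu v (p u) ((hanc_part u v h (p u)).mpr (hp u))) hpq
      · intro h
        exfalso
        have h1 := hnesub (p u) ⟨u, hp u⟩
        have h2 := hnesub (p v) ⟨v, hp v⟩
        rcases h2.2 with ⟨x, hx⟩
        exact Set.disjoint_left.mp (hIdisj hpq) (h1.1 (h.1 hx)) (h2.1 hx)
end

section
/- Let T be a rooted tree with more than one node, of depth at most d. Then the spine of T (the path from the separator of T to the root) has length d' with 1 ≤ d' < d, and removing the spine breaks T into forests F_1,…,F_{d'} such that every tree in every F_i has at most |T|/2 nodes. -/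
/-- The set of descendants of `v` (including `v` itself), i.e. the subtree rooted at `v`. -/
def RootedForest.descSet {V : Type} [Fintype V] (F : RootedForest V) (v : V) : Set V :=
  {u : V | u = v ∨ F.Ancestor v u}

/-- `v` is a separator of the rooted tree `F`: removing `v` breaks the tree into the
subtrees rooted at the children of `v`, together with the remainder containing the
root; all of these have at most `|V|/2` vertices. -/
def IsSeparator {V : Type} [Fintype V] (F : RootedForest V) (v : V) : Prop :=
  (∀ u : V, F.parent u = some v → 2 * (F.descSet u).ncard ≤ Fintype.card V) ∧
  2 * (Fintype.card V - (F.descSet v).ncard) ≤ Fintype.card V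


section Aux

private lemma RF.casesHead {α : Type*} {r : α → α → Prop} {a b : α}
    (h : Relation.TransGen r a b) :
    r a b ∨ ∃ c, r a c ∧ Relation.TransGen r c b := by
  rcases Relation.TransGen.head'_iff.mp h with ⟨c, hac, hcb⟩
  rcases hcb.cases_head with rfl | ⟨e, hce, heb⟩
  · exact Or.inl hac
  · exact Or.inr ⟨c, hac, Relation.TransGen.head' hce heb⟩


variable {V : Type} [Fintype V] (F : RootedForest V)

private lemma RF.depth_pos' (v : V) : 1 ≤ F.depth v := by
  cases h : F.parent v with
  | none => rw [F.depth_root v h]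
  | some u => rw [F.depth_parent v u h]; omega

private lemma RF.depth_lt' {a b : V}
    (h : Relation.TransGen (fun x y => F.parent x = some y) a b) :
    F.depth b < F.depth a := by
  induction h with
  | single h => rw [F.depth_parent _ _ h]; omega
  | tail _ h ih => have := F.depth_parent _ _ h; omega

private lemma RF.comp' {u v w : V}
    (hv : Relation.TransGen (fun x y => F.parent x = some y) w v) :
    Relation.TransGen (fun x y => F.parent x = some y) w u →
    v = u ∨ Relation.TransGen (fun x y => F.parent x = some y) v u ∨
      Relation.TransGen (fun x y => F.parent x = some y) u v := by
  induction hv using Relation.TransGen.head_induction_on with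
  | single h =>
    intro hu
    rcases (RF.casesHead hu) with h' | ⟨c, hc, hcu⟩
    · left
      have : some v = some u := h ▸ h'
      exact Option.some_injective _ this
    · have hcv : c = v := by
        have : some c = some v := hc ▸ h
        exact Option.some_injective _ this
      right; left; exact hcv ▸ hcu
  | head h hv' IH =>
    intro hu
    rcases (RF.casesHead hu) with h' | ⟨c, hc, hcu⟩
    · right; right
      rename_i x y
      have : u = y := by
        have : some u = some y := h' ▸ h
        exact Option.some_injective _ this
      exact this ▸ hv'
    · rename_i x y
      have : c = y := by
        have : some c = some y := hc ▸ h
        exact Option.some_injective _ this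
      exact IH (this ▸ hcu)

private lemma RF.toRoot' (w : V) :
    ∃ z : V, (w = z ∨ Relation.TransGen (fun x y => F.parent x = some y) w z) ∧
      F.parent z = none := by
  generalize hd : F.depth w = n
  induction n using Nat.strong_induction_on generalizing w with
  | _ n IH =>
    cases h : F.parent w with
    | none => exact ⟨w, Or.inl rfl, h⟩
    | some u =>
      have hdu : F.depth u < n := by have := F.depth_parent _ _ h; omega
      obtain ⟨z, hz, hzroot⟩ := IH _ hdu u rfl
      refine ⟨z, ?_, hzroot⟩
      rcases hz with rfl | hz
      · exact Or.inr (Relation.TransGen.single h)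
      · exact Or.inr (Relation.TransGen.head h hz)


end Aux

/-- Spine decomposition: in a rooted tree `T` with more than one node and depth at
most `d`, there is a separator `v₁` (the one closest to the root) whose spine, the
path `v₁, …, v_{d'}` from `v₁` up to the root, has length `d'` (the depth of `v₁`)
with `1 ≤ d' < d`; moreover, every subtree hanging off the spine (rooted at a
non-spine child `u` of a spine node `p`) has at most `|T|/2` nodes. A node `w` is
on the spine iff `w = v₁` or `w` is an ancestor of `v₁`. -/
theorem spine_decomposition (V : Type) [Fintype V] (F : RootedForest V) (d : ℕ)
    (htree : ∀ v w : V, F.parent v = none → F.parent w = none → v = w)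
    (hcard : 1 < Fintype.card V) (hdepth : ∀ v, F.depth v ≤ d) :
    ∃ v : V, IsSeparator F v ∧ 1 ≤ F.depth v ∧ F.depth v < d ∧
      ∀ u p : V, F.parent u = some p →
        (p = v ∨ F.Ancestor p v) → ¬(u = v ∨ F.Ancestor u v) →
        2 * (F.descSet u).ncard ≤ Fintype.card V := by
  classical
  set n := Fintype.card V with hn
  -- every descSet has ncard ≤ n
  have hle : ∀ x : V, (F.descSet x).ncard ≤ n := by
    intro x
    calc (F.descSet x).ncard ≤ (Set.univ : Set V).ncard :=
          Set.ncard_le_ncard (Set.subset_univ _) (Set.toFinite _)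
      _ = n := by rw [Set.ncard_univ, Nat.card_eq_fintype_card]
  -- a root exists
  have hne : Nonempty V := by
    rw [← Fintype.card_pos_iff]; omega
  obtain ⟨w0⟩ := hne
  obtain ⟨r, -, hroot⟩ := RF.toRoot' F w0
  -- everything is a descendant of the root
  have hdescr : F.descSet r = Set.univ := by
    ext x
    simp only [Set.mem_univ, iff_true]
    obtain ⟨z, hz, hzroot⟩ := RF.toRoot' F x
    have : z = r := htree z r hzroot hroot
    subst this
    exact hz.imp id id
  have hrS : n < 2 * (F.descSet r).ncard := by
    rw [hdescr, Set.ncard_univ, Nat.card_eq_fintype_card]; omega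
  -- choose the deepest vertex whose subtree has more than half the vertices
  have hSne : (Finset.univ.filter (fun v : V => n < 2 * (F.descSet v).ncard)).Nonempty :=
    ⟨r, by simp [hrS]⟩
  obtain ⟨v, hvmem, hvmax⟩ := Finset.exists_max_image _ F.depth hSne
  simp only [Finset.mem_filter, Finset.mem_univ, true_and] at hvmem
  have hvmax' : ∀ a : V, n < 2 * (F.descSet a).ncard → F.depth a ≤ F.depth v := by
    intro a ha; exact hvmax a (by simp [ha])
  -- children of v have small subtrees
  have child_small : ∀ u : V, F.parent u = some v → 2 * (F.descSet u).ncard ≤ n := by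
    intro u hu
    by_contra h
    push_neg at h
    have h1 := hvmax' u h
    have h2 := F.depth_parent u v hu
    omega
  have hsep : IsSeparator F v := by
    constructor
    · exact child_small
    · have := hle v; omega
  refine ⟨v, hsep, RF.depth_pos' F v, ?_, ?_⟩
  · -- depth v < d : v has a strict descendant
    have h2 : 1 < (F.descSet v).ncard := by omega
    obtain ⟨w, hw, hwv⟩ := Set.exists_ne_of_one_lt_ncard h2 v
    have hanc : Relation.TransGen (fun x y => F.parent x = some y) w v := by
      rcases hw with rfl | hw
      · exact absurd rfl hwv
      · exact hw
    have := RF.depth_lt' F hanc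
    have := hdepth w
    omega
  · -- subtrees hanging off the spine are small
    intro u p hup hps huns
    rcases hps with rfl | hpv
    · exact child_small u hup
    · -- p is a strict ancestor of v; descSet u and descSet v are disjoint
      have hpv' : Relation.TransGen (fun x y => F.parent x = some y) v p := hpv
      have hdp : F.depth p < F.depth v := RF.depth_lt' F hpv'
      have hdu : F.depth u = F.depth p + 1 := F.depth_parent u p hup
      have hnotuv : ¬ Relation.TransGen (fun x y => F.parent x = some y) u v := by
        intro h
        have := RF.depth_lt' F h
        omega
      have hdisj : Disjoint (F.descSet u) (F.descSet v) := by
        rw [Set.disjoint_left]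
        intro w hwu hwv
        rcases hwu with rfl | hwu <;> rcases hwv with h | hwv
        · exact huns (Or.inl h)
        · exact hnotuv hwv
        · subst h; exact huns (Or.inr hwu)
        · rcases RF.comp' F hwu hwv with h | h | h
          · exact huns (Or.inl h)
          · exact hnotuv h
          · exact huns (Or.inr h)
      have hsum : (F.descSet u).ncard + (F.descSet v).ncard ≤ n := by
        have h1 : (F.descSet u ∪ F.descSet v).ncard
            = (F.descSet u).ncard + (F.descSet v).ncard :=
          Set.ncard_union_eq hdisj (Set.toFinite _) (Set.toFinite _)
        have h2 : (F.descSet u ∪ F.descSet v).ncard ≤ n := by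
          calc (F.descSet u ∪ F.descSet v).ncard ≤ (Set.univ : Set V).ncard :=
                Set.ncard_le_ncard (Set.subset_univ _) (Set.toFinite _)
            _ = n := by rw [Set.ncard_univ, Nat.card_eq_fintype_card]
        omega
      omega
end

section
/- Let F_1,…,F_{d'} be forests with Σ_i |F_i| ≤ 2^{k+1}, let x = ⌈2^k/(d·(k+1)²)⌉, and for each i let b_i be the smallest integer with ⌊c_k·|F_i|⌋ ≤ b_i·x. If d' < d, then Σ_{i=1}^{d'} b_i < d + 2·c_k·d·(k+1)² ≤ 2·c_{k+1}·d·(k+1)². -/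
/-- Let `F_1, …, F_{d'}` be forests of sizes `a i` with `Σ a i ≤ 2^{k+1}`, let
`x = x_{k+1} = ⌈2^k/(d(k+1)²)⌉`, and let `b i` be the smallest integer with
`⌊c_k·a i⌋ ≤ b i · x`. If `d' < d` then
`Σ b i < d + 2·c_k·d·(k+1)² ≤ 2·c_{k+1}·d·(k+1)²`. -/
theorem spine_offsets_bound (k d d' : ℕ) (hd : 1 ≤ d) (hd' : d' < d)
    (a b : Fin d' → ℕ) (hsum : ∑ i, a i ≤ 2 ^ (k + 1))
    (hb : ∀ i, ⌊cseq k * (a i : ℚ)⌋₊ ≤ b i * xval d (k + 1) ∧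
      ∀ m : ℕ, ⌊cseq k * (a i : ℚ)⌋₊ ≤ m * xval d (k + 1) → b i ≤ m) :
    ((∑ i, b i : ℕ) : ℚ) < (d : ℚ) + 2 * cseq k * d * ((k : ℚ) + 1) ^ 2 ∧
    (d : ℚ) + 2 * cseq k * d * ((k : ℚ) + 1) ^ 2 ≤
      2 * cseq (k + 1) * d * ((k : ℚ) + 1) ^ 2 := by
  have hc1 : (1:ℚ) ≤ cseq k := by
    unfold cseq
    have : (0:ℚ) ≤ ∑ j ∈ Finset.Icc 1 k, (1 : ℚ) / (j : ℚ) ^ 2 :=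
      Finset.sum_nonneg (fun j _ => by positivity)
    linarith
  set D : ℕ := d * (k + 1) ^ 2 with hDdef
  have hDpos : 0 < D := by positivity
  have hxeq : xval d (k + 1) = (2 ^ k + D - 1) / D := by
    simp [xval, hDdef]
  set x : ℕ := xval d (k + 1) with hxdef
  have h2k : 1 ≤ 2 ^ k := Nat.one_le_two_pow
  have hx1 : 1 ≤ x := by
    rw [hxeq, Nat.one_le_div_iff hDpos]; omega
  have hxD : 2 ^ k ≤ D * x := by
    have hmod := Nat.div_add_mod (2 ^ k + D - 1) D
    have hlt : (2 ^ k + D - 1) % D < D := Nat.mod_lt _ hDpos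
    rw [hxeq]
    omega
  -- per-index bound
  have hbi : ∀ i, b i * x + 1 ≤ ⌊cseq k * (a i : ℚ)⌋₊ + x := by
    intro i
    obtain ⟨hb1, hb2⟩ := hb i
    rcases Nat.eq_zero_or_pos (b i) with h0 | hpos
    · simp [h0]; omega
    · by_contra hcon
      push_neg at hcon
      have hxle : x ≤ b i * x := Nat.le_mul_of_pos_left x hpos
      have hmul : (b i - 1) * x + x = b i * x := by rw [Nat.sub_one_mul]; omega
      have hfloor : ⌊cseq k * (a i : ℚ)⌋₊ ≤ (b i - 1) * x := by omega
      have := hb2 _ hfloor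
      omega
  have hsnat : (∑ i, b i) * x + d' ≤ (∑ i, ⌊cseq k * (a i : ℚ)⌋₊) + d' * x := by
    have := Finset.sum_le_sum (fun i (_ : i ∈ Finset.univ) => hbi i)
    simpa [Finset.sum_add_distrib, Finset.sum_mul, Finset.mul_sum, mul_comm] using this
  -- rational versions
  have hxpos : (0:ℚ) < (x:ℚ) := by exact_mod_cast hx1
  have hA : ((∑ i, b i : ℕ) : ℚ) * x + d' ≤ ((∑ i, ⌊cseq k * (a i : ℚ)⌋₊ : ℕ) : ℚ) + d' * x := by
    exact_mod_cast hsnat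
  have hB : ((∑ i, ⌊cseq k * (a i : ℚ)⌋₊ : ℕ) : ℚ) ≤ cseq k * 2 ^ (k + 1) := by
    push_cast
    calc ∑ i, ((⌊cseq k * (a i : ℚ)⌋₊ : ℚ)) ≤ ∑ i, cseq k * (a i : ℚ) :=
          Finset.sum_le_sum (fun i _ => Nat.floor_le (by positivity))
      _ = cseq k * ∑ i, (a i : ℚ) := by rw [Finset.mul_sum]
      _ ≤ cseq k * 2 ^ (k + 1) := by
          have : (∑ i, (a i : ℚ)) ≤ (2:ℚ) ^ (k + 1) := by exact_mod_cast hsum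
          nlinarith
  have hC : (2:ℚ) ^ k ≤ (x:ℚ) * ((d:ℚ) * ((k:ℚ) + 1) ^ 2) := by
    have : ((2 ^ k : ℕ) : ℚ) ≤ ((D * x : ℕ) : ℚ) := by exact_mod_cast hxD
    push_cast [hDdef] at this
    linarith
  have hd'q : ((d':ℚ)) + 1 ≤ (d:ℚ) := by exact_mod_cast hd'
  constructor
  · rw [← mul_lt_mul_iff_of_pos_right hxpos]
    have h2 : (2:ℚ) ^ (k + 1) = 2 * 2 ^ k := by ring
    nlinarith [hA, hB, hC, hxpos, hd'q, hc1]
  · have hstep : cseq (k + 1) = cseq k + 1 / ((k:ℚ) + 1) ^ 2 := by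
      unfold cseq
      rw [Finset.sum_Icc_succ_top (by omega : 1 ≤ k + 1)]
      push_cast
      ring
    have hkpos : (0:ℚ) < ((k:ℚ) + 1) ^ 2 := by positivity
    have hdq : (1:ℚ) ≤ (d:ℚ) := by exact_mod_cast hd
    rw [hstep]
    have : 2 * (cseq k + 1 / ((k:ℚ) + 1) ^ 2) * d * ((k:ℚ) + 1) ^ 2
        = 2 * cseq k * d * ((k:ℚ) + 1) ^ 2 + 2 * d := by
      field_simp
    rw [this]
    linarith
end

section
/- There exists an ancestry labeling scheme for the family F(n,d) of rooted forests with at most n nodes and depth at most d, with label size log₂ n + 2·log₂ d + O(1): there is a set U of size O(n·d²) and a decoder D such that every forest F ∈ F(n,d) admits a labeling L : V(F) → U with D(L(u),L(v)) = 1 iff u is a strict ancestor of v. -/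
namespace AncAux

open Relation
open scoped Classical

variable {V : Type} [Fintype V]

/-- one parent-step relation -/
abbrev pr (F : RootedForest V) : V → V → Prop := fun a b => F.parent a = some b

lemma anc_iff {F : RootedForest V} {u v : V} :
    F.Ancestor u v ↔ Relation.TransGen (pr F) v u := Iff.rfl

lemma depth_pos (F : RootedForest V) (v : V) : 1 ≤ F.depth v := by
  cases h : F.parent v with
  | none => simp [F.depth_root v h]
  | some u => simp [F.depth_parent v u h]

lemma depth_lt_of_anc {F : RootedForest V} {u v : V} (h : F.Ancestor u v) :
    F.depth u < F.depth v := by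
  rw [anc_iff] at h
  induction h with
  | single h => have := F.depth_parent _ _ h; omega
  | tail _ h ih => have := F.depth_parent _ _ h; omega

lemma anc_irrefl (F : RootedForest V) (v : V) : ¬ F.Ancestor v v := by
  intro h; exact absurd (depth_lt_of_anc h) (lt_irrefl _)

lemma rtg_depth_le {F : RootedForest V} {w u : V}
    (h : Relation.ReflTransGen (pr F) w u) : F.depth u ≤ F.depth w := by
  rcases (Relation.reflTransGen_iff_eq_or_transGen).mp h with rfl | h
  · exact le_rfl
  · exact (depth_lt_of_anc (anc_iff.mpr h)).le

lemma rtg_eq_of_depth_le {F : RootedForest V} {w u : V}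
    (h : Relation.ReflTransGen (pr F) w u) (hd : F.depth w ≤ F.depth u) : w = u := by
  rcases (Relation.reflTransGen_iff_eq_or_transGen).mp h with rfl | h
  · rfl
  · exact absurd (depth_lt_of_anc (anc_iff.mpr h)) (by omega)

lemma rtg_total {F : RootedForest V} :
    ∀ (N : ℕ) (w a b : V), F.depth w ≤ N →
      Relation.ReflTransGen (pr F) w a → Relation.ReflTransGen (pr F) w b →
      F.depth b ≤ F.depth a → Relation.ReflTransGen (pr F) a b := by
  intro N
  induction N with
  | zero => intro w a b hN _ _ _; exact absurd (depth_pos F w) (by omega)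
  | succ N ih =>
    intro w a b hN hwa hwb hba
    rcases hwa.cases_head with rfl | ⟨p, hp, hpa⟩
    · exact hwb
    · rcases hwb.cases_head with rfl | ⟨p', hp', hpb⟩
      · have hle := rtg_depth_le hwa
        have : w = a := rtg_eq_of_depth_le hwa (by omega)
        subst this
        exact Relation.ReflTransGen.refl
      · have hpp : p' = p := (Option.some.inj (hp.symm.trans hp')).symm
        rw [hpp] at hpb
        have hdp := F.depth_parent w p hp
        exact ih p a b (by omega) hpa hpb hba

lemma eq_of_rtg_rtg_depth_eq {F : RootedForest V} {w a b : V}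
    (ha : Relation.ReflTransGen (pr F) w a) (hb : Relation.ReflTransGen (pr F) w b)
    (h : F.depth a = F.depth b) : a = b :=
  rtg_eq_of_depth_le (rtg_total (F.depth w) w a b le_rfl ha hb h.ge) h.le

open scoped Classical in
/-- the subtree rooted at `v`, as a finset -/
noncomputable def subFin (F : RootedForest V) (v : V) : Finset V :=
  Finset.univ.filter (fun w => Relation.ReflTransGen (pr F) w v)

open scoped Classical in
noncomputable def childFin (F : RootedForest V) (v : V) : Finset V :=
  Finset.univ.filter (fun c => F.parent c = some v)

open scoped Classical in
noncomputable def rootsFin (F : RootedForest V) : Finset V :=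
  Finset.univ.filter (fun r => F.parent r = none)

lemma mem_subFin {F : RootedForest V} {w v : V} :
    w ∈ subFin F v ↔ Relation.ReflTransGen (pr F) w v := by
  simp [subFin]

lemma mem_childFin {F : RootedForest V} {c v : V} :
    c ∈ childFin F v ↔ F.parent c = some v := by
  simp [childFin]

lemma mem_rootsFin {F : RootedForest V} {r : V} :
    r ∈ rootsFin F ↔ F.parent r = none := by
  simp [rootsFin]

lemma self_mem_subFin {F : RootedForest V} (v : V) : v ∈ subFin F v :=
  mem_subFin.mpr Relation.ReflTransGen.refl

lemma depth_le_of_mem_subFin {F : RootedForest V} {w v : V} (h : w ∈ subFin F v) :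
    F.depth v ≤ F.depth w := rtg_depth_le (mem_subFin.mp h)

lemma anc_of_mem_subFin {F : RootedForest V} {w v : V} (h : w ∈ subFin F v) (hne : w ≠ v) :
    F.Ancestor v w := by
  rcases (Relation.reflTransGen_iff_eq_or_transGen).mp (mem_subFin.mp h) with h1 | h1
  · exact absurd h1.symm hne
  · exact anc_iff.mpr h1

lemma subFin_decomp_mem {F : RootedForest V} {w v : V} :
    w ∈ subFin F v ↔ w = v ∨ ∃ c ∈ childFin F v, w ∈ subFin F c := by
  rw [mem_subFin, Relation.reflTransGen_iff_eq_or_transGen]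
  constructor
  · rintro (rfl | h)
    · exact Or.inl rfl
    · rcases (Relation.TransGen.tail'_iff).mp h with ⟨c, hc1, hc2⟩
      exact Or.inr ⟨c, mem_childFin.mpr hc2, mem_subFin.mpr hc1⟩
  · rintro (rfl | ⟨c, hc, hw⟩)
    · exact Or.inl rfl
    · exact Or.inr ((Relation.TransGen.tail'_iff).mpr
        ⟨c, mem_subFin.mp hw, mem_childFin.mp hc⟩)

lemma subFin_disjoint {F : RootedForest V} {c c' : V} (hne : c ≠ c')
    (hd : F.depth c = F.depth c') : Disjoint (subFin F c) (subFin F c') := by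
  rw [Finset.disjoint_left]
  intro w h h'
  exact hne (eq_of_rtg_rtg_depth_eq (mem_subFin.mp h) (mem_subFin.mp h') hd)

lemma not_anc_across {F : RootedForest V} {c c' u w : V} (hne : c ≠ c')
    (hd : F.depth c = F.depth c') (hu : u ∈ subFin F c) (hw : w ∈ subFin F c') :
    ¬ F.Ancestor u w := by
  intro h
  have hwu : Relation.ReflTransGen (pr F) w u := (anc_iff.mp h).to_reflTransGen
  have huc := mem_subFin.mp hu
  have hwc' := mem_subFin.mp hw
  have h1 : F.depth c' ≤ F.depth u := hd ▸ rtg_depth_le huc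
  have huc' := rtg_total (F.depth w) w u c' le_rfl hwu hwc' h1
  exact hne (eq_of_rtg_rtg_depth_eq huc huc' hd)

lemma child_depth {F : RootedForest V} {v c : V} (h : c ∈ childFin F v) :
    F.depth c = F.depth v + 1 := F.depth_parent _ _ (mem_childFin.mp h)

lemma anc_of_child_mem {F : RootedForest V} {v c w : V} (hc : c ∈ childFin F v)
    (hw : w ∈ subFin F c) : F.Ancestor v w :=
  anc_iff.mpr (Relation.TransGen.tail' (mem_subFin.mp hw) (mem_childFin.mp hc))

lemma not_mem_child_sub {F : RootedForest V} {v c : V} (hc : c ∈ childFin F v) :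
    v ∉ subFin F c := by
  intro h
  have h1 := depth_le_of_mem_subFin h
  have h2 := child_depth hc
  omega

lemma subFin_eq_insert (F : RootedForest V) (v : V) :
    subFin F v = insert v ((childFin F v).biUnion (fun c => subFin F c)) := by
  ext w
  rw [subFin_decomp_mem, Finset.mem_insert, Finset.mem_biUnion]

lemma card_subFin (F : RootedForest V) (v : V) :
    (subFin F v).card = 1 + ∑ c ∈ childFin F v, (subFin F c).card := by
  have h1 : v ∉ (childFin F v).biUnion fun c => subFin F c := by
    rw [Finset.mem_biUnion]
    rintro ⟨c, hc, hv⟩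
    exact not_mem_child_sub hc hv
  rw [subFin_eq_insert F v, Finset.card_insert_of_notMem h1, Finset.card_biUnion, add_comm]
  intro c hc c' hc' hne
  exact subFin_disjoint hne ((child_depth hc).trans (child_depth hc').symm)

lemma exists_root (F : RootedForest V) :
    ∀ (N : ℕ) (w : V), F.depth w ≤ N → ∃ r ∈ rootsFin F, w ∈ subFin F r := by
  intro N
  induction N with
  | zero => intro w hw; exact absurd (depth_pos F w) (by omega)
  | succ N ih =>
    intro w hw
    cases hp : F.parent w with
    | none => exact ⟨w, mem_rootsFin.mpr hp, self_mem_subFin w⟩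
    | some p =>
      have hd := F.depth_parent w p hp
      obtain ⟨r, hr, hpr⟩ := ih p (by omega)
      exact ⟨r, hr, mem_subFin.mpr (Relation.ReflTransGen.head hp (mem_subFin.mp hpr))⟩

lemma root_depth {F : RootedForest V} {r : V} (h : r ∈ rootsFin F) : F.depth r = 1 :=
  F.depth_root r (mem_rootsFin.mp h)

lemma sum_card_roots (F : RootedForest V) :
    ∑ r ∈ rootsFin F, (subFin F r).card = Fintype.card V := by
  have huniv : (Finset.univ : Finset V) = (rootsFin F).biUnion (fun r => subFin F r) := by
    ext w
    simp only [Finset.mem_univ, true_iff, Finset.mem_biUnion]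
    exact exists_root F (F.depth w) w le_rfl
  rw [← Finset.card_univ, huniv, Finset.card_biUnion]
  intro r hr r' hr' hne
  exact subFin_disjoint hne ((root_depth hr).trans (root_depth hr').symm)

/-! ### numeric helpers -/

/-- decoded length of an interval with left end `l` and class `a` -/
def lenOf (d l a : ℕ) : ℕ := if a < 2*d then a else a * 2 ^ (padicValNat 2 l)

/-- scale exponent used for a required length `x` (big case `2*d ≤ x`) -/
def bExp (d x : ℕ) : ℕ := Nat.log 2 (x / (2*d))

def aOf (d x : ℕ) : ℕ := if x < 2*d then x else x / 2 ^ (bExp d x) + 1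

def lenR (d x : ℕ) : ℕ :=
  if x < 2*d then x else (x / 2 ^ (bExp d x) + 1) * 2 ^ (bExp d x)

def alignPos (d x pos : ℕ) : ℕ :=
  if x < 2*d then pos
  else (if (pos / 2 ^ (bExp d x)) % 2 = 0 then pos / 2 ^ (bExp d x) + 1
        else pos / 2 ^ (bExp d x) + 2) * 2 ^ (bExp d x)

lemma big_facts {d x : ℕ} (hd : 1 ≤ d) (hbig : 2*d ≤ x) :
    2*d * 2 ^ (bExp d x) ≤ x ∧ x / 2 ^ (bExp d x) < 4*d := by
  set b := bExp d x with hb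
  have hq1 : 1 ≤ x / (2*d) := (Nat.one_le_div_iff (by omega)).mpr hbig
  have h1 : 2 ^ b ≤ x / (2*d) := Nat.pow_log_le_self 2 (by omega)
  have h2 : x / (2*d) < 2 ^ (b+1) := Nat.lt_pow_succ_log_self (by omega) _
  have hb1 : 2 ^ b * (2*d) ≤ x := (Nat.le_div_iff_mul_le (by omega)).mp h1
  have hx2 : x < 2 ^ (b+1) * (2*d) := by
    have h3 : x / (2*d) + 1 ≤ 2 ^ (b+1) := h2
    have h4 := Nat.div_add_mod x (2*d)
    have h5 : x % (2*d) < 2*d := Nat.mod_lt _ (by omega)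
    calc x < 2*d * (x / (2*d)) + 2*d := by omega
    _ = (x / (2*d) + 1) * (2*d) := by ring
    _ ≤ 2 ^ (b+1) * (2*d) := by
        exact Nat.mul_le_mul_right _ h3
  constructor
  · calc 2*d * 2 ^ b = 2 ^ b * (2*d) := by ring
    _ ≤ x := hb1
  · rw [Nat.div_lt_iff_lt_mul (Nat.pow_pos (n := b) (by omega))]
    calc x < 2 ^ (b+1) * (2*d) := hx2
    _ = 4*d * 2 ^ b := by ring

lemma le_lenR {d x : ℕ} : x ≤ lenR d x := by
  unfold lenR
  split
  · exact le_rfl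
  · set b := bExp d x
    have h4 := Nat.div_add_mod x (2 ^ b)
    have h5 : x % (2 ^ b) < 2 ^ b := Nat.mod_lt _ (Nat.pow_pos (n := b) (by omega))
    have h6 : (x / 2 ^ b + 1) * 2 ^ b = 2 ^ b * (x / 2 ^ b) + 2 ^ b := by ring
    omega

lemma lenR_pos {d x : ℕ} (hx : 1 ≤ x) : 1 ≤ lenR d x := le_trans hx le_lenR

lemma aOf_le {d x : ℕ} (hd : 1 ≤ d) : aOf d x ≤ 4*d := by
  unfold aOf
  split
  · omega
  · have := (big_facts (x := x) hd (by omega)).2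
    omega

lemma le_alignPos {d x pos : ℕ} : pos ≤ alignPos d x pos := by
  unfold alignPos
  split
  · exact le_rfl
  · set b := bExp d x
    have h4 := Nat.div_add_mod pos (2 ^ b)
    have h5 : pos % (2 ^ b) < 2 ^ b := Nat.mod_lt _ (Nat.pow_pos (n := b) (by omega))
    have key : pos ≤ (pos / 2 ^ b + 1) * 2 ^ b := by
      have h6 : (pos / 2 ^ b + 1) * 2 ^ b = 2 ^ b * (pos / 2 ^ b) + 2 ^ b := by ring
      omega
    split
    · exact key
    · exact le_trans key (Nat.mul_le_mul_right _ (by omega))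

lemma alignPos_le {d x pos : ℕ} : alignPos d x pos ≤ pos + 2 * 2 ^ (bExp d x) := by
  unfold alignPos
  split
  · omega
  · set b := bExp d x
    have h4 := Nat.div_add_mod pos (2 ^ b)
    have key : (pos / 2 ^ b + 2) * 2 ^ b ≤ pos + 2 * 2 ^ b := by
      have : (pos / 2 ^ b + 2) * 2 ^ b = 2 ^ b * (pos / 2 ^ b) + 2 * 2 ^ b := by ring
      omega
    split
    · exact le_trans (Nat.mul_le_mul_right _ (by omega)) key
    · exact key

lemma lenOf_align {d x pos : ℕ} (hd : 1 ≤ d) :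
    lenOf d (alignPos d x pos) (aOf d x) = lenR d x := by
  unfold lenOf alignPos aOf lenR
  by_cases h : x < 2*d
  · simp [h]
  · have hbig : 2*d ≤ x := by omega
    have h2 := (big_facts hd hbig).1
    set b := bExp d x with hbdef
    have hq : 2*d ≤ x / 2 ^ b :=
      (Nat.le_div_iff_mul_le (Nat.pow_pos (n := b) (by omega))).mpr (by linarith [h2])
    have hna : ¬ (x / 2 ^ b + 1 < 2*d) := by omega
    simp only [if_neg h, if_neg hna]
    -- compute the 2-adic valuation of t * 2^b with t odd
    have hval : ∀ t : ℕ, t % 2 = 1 → padicValNat 2 (t * 2 ^ b) = b := by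
      intro t ht
      have ht0 : t ≠ 0 := by omega
      rw [padicValNat.mul (p := 2) ht0 (by positivity), padicValNat.prime_pow,
        padicValNat.eq_zero_of_not_dvd (by omega)]
      omega
    split
    · rename_i hpar
      rw [hval _ (by omega)]
    · rename_i hpar
      rw [hval _ (by omega)]

lemma quant_bound {d x pos : ℕ} (hd : 1 ≤ d) :
    (2*d)^2 * (alignPos d x pos + lenR d x - pos) ≤ ((2*d+1)*(2*d+4)) * x := by
  by_cases h : x < 2*d
  · have h1 : alignPos d x pos = pos := by unfold alignPos; simp [h]
    have h2 : lenR d x = x := by unfold lenR; simp [h]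
    rw [h1, h2]
    have : pos + x - pos = x := by omega
    rw [this]
    nlinarith
  · have hbig : 2*d ≤ x := by omega
    set b := bExp d x with hbdef
    have hP : 2*d * 2 ^ b ≤ x := (big_facts hd hbig).1
    have hlen : lenR d x ≤ x + 2 ^ b := by
      unfold lenR
      rw [if_neg h, ← hbdef]
      have h4 := Nat.div_add_mod x (2 ^ b)
      have : (x / 2 ^ b + 1) * 2 ^ b = 2 ^ b * (x / 2 ^ b) + 2 ^ b := by ring
      omega
    have hy1 : pos ≤ alignPos d x pos := le_alignPos
    have hy2 : alignPos d x pos ≤ pos + 2 * 2 ^ b := alignPos_le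
    have hsplit : alignPos d x pos + lenR d x - pos
        = (alignPos d x pos - pos) + lenR d x := by omega
    rw [hsplit]
    have hgap : alignPos d x pos - pos ≤ 2 * 2 ^ b := by omega
    have e1 : (2*d)^2 * (alignPos d x pos - pos) ≤ 4*d*x := by
      calc (2*d)^2 * (alignPos d x pos - pos) ≤ (2*d)^2 * (2 * 2 ^ b) :=
        Nat.mul_le_mul_left _ hgap
      _ = (4*d) * (2*d*2 ^ b) := by ring
      _ ≤ (4*d) * x := Nat.mul_le_mul_left _ hP
    have e2 : (2*d)^2 * lenR d x ≤ (2*d)^2 * x + 2*d*x := by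
      have h1 : (2*d)^2 * lenR d x ≤ (2*d)^2 * (x + 2 ^ b) := Nat.mul_le_mul_left _ hlen
      have h2 : (2*d)^2 * (x + 2 ^ b) = (2*d)^2 * x + 2*d*(2*d*2 ^ b) := by ring
      have h3 : 2*d*(2*d*2 ^ b) ≤ 2*d*x := Nat.mul_le_mul_left _ hP
      omega
    calc (2*d)^2 * ((alignPos d x pos - pos) + lenR d x)
        = (2*d)^2 * (alignPos d x pos - pos) + (2*d)^2 * lenR d x := by ring
      _ ≤ 4*d*x + ((2*d)^2 * x + 2*d*x) := by omega
      _ ≤ ((2*d+1)*(2*d+4)) * x := by nlinarith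

lemma pow_bound {d : ℕ} (hd : 1 ≤ d) :
    ((2*d+1)*(2*d+4))^d ≤ 55 * (2*d)^(2*d) := by
  have hd0 : (1:ℝ) ≤ (d:ℝ) := by exact_mod_cast hd
  have hdpos : (0:ℝ) < (d:ℝ) := by linarith
  have h1 : ((2*(d:ℝ)+1)*(2*(d:ℝ)+4)) ≤ (4*(d:ℝ)^2) * (1 + 4/(d:ℝ)) := by
    have h2 : (4*(d:ℝ)^2) * (1+4/(d:ℝ)) = 4*(d:ℝ)^2 + 16*(d:ℝ) := by
      field_simp; ring
    rw [h2]; nlinarith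
  have h3 : (1 + 4/(d:ℝ)) ≤ Real.exp (4/(d:ℝ)) := by
    have := Real.add_one_le_exp (4/(d:ℝ)); linarith
  have h5 : Real.exp (4/(d:ℝ)) ^ d = Real.exp 4 := by
    rw [← Real.exp_nat_mul]
    congr 1
    field_simp
  have h6 : Real.exp 4 ≤ 55 := by
    have h := Real.exp_one_lt_d9
    have he4 : Real.exp 4 = (Real.exp 1)^(4:ℕ) := by
      rw [← Real.exp_nat_mul]; norm_num
    have hpow : (Real.exp 1)^(4:ℕ) ≤ (2.7182818286:ℝ)^(4:ℕ) :=
      pow_le_pow_left₀ (Real.exp_pos 1).le h.le 4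
    rw [he4]
    refine le_trans hpow (by norm_num)
  have main : (((2*d+1)*(2*d+4) : ℕ) : ℝ)^d ≤ 55 * (((2*d) ^ (2*d) : ℕ):ℝ) := by
    push_cast
    calc ((2*(d:ℝ)+1)*(2*(d:ℝ)+4))^d ≤ ((4*(d:ℝ)^2) * (1 + 4/(d:ℝ)))^d := by
          apply pow_le_pow_left₀ (by positivity) h1
      _ = (4*(d:ℝ)^2)^d * (1+4/(d:ℝ))^d := mul_pow _ _ _
      _ ≤ (4*(d:ℝ)^2)^d * Real.exp (4/(d:ℝ)) ^ d := by
          apply mul_le_mul_of_nonneg_left _ (by positivity)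
          exact pow_le_pow_left₀ (by positivity) h3 d
      _ = (4*(d:ℝ)^2)^d * Real.exp 4 := by rw [h5]
      _ ≤ (4*(d:ℝ)^2)^d * 55 := mul_le_mul_of_nonneg_left h6 (by positivity)
      _ = 55 * ((2*(d:ℝ))^2)^d := by ring
      _ = 55 * (2*(d:ℝ))^(2*d) := by rw [← pow_mul, mul_comm 2 d]
  have := main
  rw [show (((2*d+1)*(2*d+4) : ℕ) : ℝ)^d = ((((2*d+1)*(2*d+4))^d : ℕ) : ℝ) by push_cast; ring] at this
  exact_mod_cast this

/-! ### the packing construction -/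

/-- The labels `(left endpoint, length class)` for the subtree of `v` can be packed
into an interval starting at any position `x ≥ 1`, with controlled total length. -/
def PackProp (F : RootedForest V) (d : ℕ) (v : V) : Prop :=
  ∀ x : ℕ, 1 ≤ x → ∃ (lab : V → ℕ × ℕ) (out : ℕ),
    x ≤ out ∧
    (out - x) * (2*d)^(2*(d - F.depth v + 1)) ≤
      (subFin F v).card * ((2*d+1)*(2*d+4))^(d - F.depth v + 1) ∧
    (∀ w ∈ subFin F v,
      x ≤ (lab w).1 ∧ (lab w).1 + lenOf d (lab w).1 (lab w).2 ≤ out ∧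
      1 ≤ lenOf d (lab w).1 (lab w).2 ∧ (lab w).2 ≤ 4*d) ∧
    (∀ u ∈ subFin F v, ∀ w ∈ subFin F v,
      ((F.depth u < F.depth w ∧ (lab u).1 ≤ (lab w).1 ∧
        (lab w).1 < (lab u).1 + lenOf d (lab u).1 (lab u).2) ↔ F.Ancestor u w))

lemma packList (F : RootedForest V) (d k : ℕ) :
    ∀ (cs : List V), cs.Nodup → (∀ c ∈ cs, F.depth c = k) →
    (∀ c ∈ cs, PackProp F d c) →
    ∀ x : ℕ, 1 ≤ x → ∃ (lab : V → ℕ × ℕ) (out : ℕ),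
      x ≤ out ∧
      (out - x) * (2*d)^(2*(d - k + 1)) ≤
        (cs.map (fun c => (subFin F c).card)).sum * ((2*d+1)*(2*d+4))^(d - k + 1) ∧
      (∀ w, (∃ c ∈ cs, w ∈ subFin F c) →
        x ≤ (lab w).1 ∧ (lab w).1 + lenOf d (lab w).1 (lab w).2 ≤ out ∧
        1 ≤ lenOf d (lab w).1 (lab w).2 ∧ (lab w).2 ≤ 4*d) ∧
      (∀ u w, (∃ c ∈ cs, u ∈ subFin F c) → (∃ c ∈ cs, w ∈ subFin F c) →
        ((F.depth u < F.depth w ∧ (lab u).1 ≤ (lab w).1 ∧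
          (lab w).1 < (lab u).1 + lenOf d (lab u).1 (lab u).2) ↔ F.Ancestor u w)) := by
  intro cs
  induction cs with
  | nil =>
    intro _ _ _ x hx
    refine ⟨fun _ => (0,0), x, le_rfl, by simp, ?_, ?_⟩
    · rintro w ⟨c, hc, -⟩; exact absurd hc List.not_mem_nil
    · rintro u w ⟨c, hc, -⟩; exact absurd hc List.not_mem_nil
  | cons c cs ih =>
    intro hnd hdep hpp x hx
    obtain ⟨lab1, out1, h1x, h1q, h1A, h1I⟩ :=
      hpp c List.mem_cons_self x hx
    obtain ⟨lab2, out2, h2x, h2q, h2A, h2I⟩ :=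
      ih (List.Nodup.of_cons hnd) (fun c' hc' => hdep c' (List.mem_cons_of_mem c hc'))
        (fun c' hc' => hpp c' (List.mem_cons_of_mem c hc')) out1 (le_trans hx h1x)
    -- a member of a later subtree is not in the subtree of `c`
    have hnotc : ∀ w, (∃ c' ∈ cs, w ∈ subFin F c') → w ∉ subFin F c := by
      rintro w ⟨c', hc', hw⟩ hwc
      have hne : c' ≠ c := fun h => (List.nodup_cons.mp hnd).1 (h ▸ hc')
      have hdd : F.depth c' = F.depth c :=
        (hdep c' (List.mem_cons_of_mem c hc')).trans (hdep c List.mem_cons_self).symm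
      exact (Finset.disjoint_left.mp (subFin_disjoint hne hdd)) hw hwc
    have hcne : ∀ u w, u ∈ subFin F c → (∃ c' ∈ cs, w ∈ subFin F c') →
        ¬ F.Ancestor u w ∧ ¬ F.Ancestor w u := by
      rintro u w hu ⟨c', hc', hw⟩
      have hne : c ≠ c' := fun h => (List.nodup_cons.mp hnd).1 (h ▸ hc')
      have hdd : F.depth c = F.depth c' :=
        (hdep c List.mem_cons_self).trans (hdep c' (List.mem_cons_of_mem c hc')).symm
      exact ⟨not_anc_across hne hdd hu hw, not_anc_across hne.symm hdd.symm hw hu⟩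
    refine ⟨fun w => if w ∈ subFin F c then lab1 w else lab2 w, out2,
      le_trans h1x h2x, ?_, ?_, ?_⟩
    · -- quantitative bound
      rw [List.map_cons, List.sum_cons, Nat.add_mul]
      have hsplit : out2 - x ≤ (out1 - x) + (out2 - out1) := by omega
      calc (out2 - x) * (2*d)^(2*(d - k + 1))
          ≤ ((out1 - x) + (out2 - out1)) * (2*d)^(2*(d - k + 1)) :=
            Nat.mul_le_mul_right _ hsplit
        _ = (out1 - x) * (2*d)^(2*(d - k + 1)) + (out2 - out1) * (2*d)^(2*(d - k + 1)) := by
            ring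
        _ ≤ _ := by
            have hk : F.depth c = k := hdep c List.mem_cons_self
            rw [hk] at h1q
            exact Nat.add_le_add h1q h2q
    · -- interval bounds
      rintro w hw
      by_cases hwc : w ∈ subFin F c
      · simp only [if_pos hwc]
        obtain ⟨a1, a2, a3, a4⟩ := h1A w hwc
        exact ⟨a1, le_trans a2 h2x, a3, a4⟩
      · rcases hw with ⟨c', hc', hw'⟩
        have hc'cs : c' ∈ cs := by
          rcases List.mem_cons.mp hc' with rfl | h
          · exact absurd hw' hwc
          · exact h
        simp only [if_neg hwc]
        obtain ⟨a1, a2, a3, a4⟩ := h2A w ⟨c', hc'cs, hw'⟩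
        exact ⟨le_trans h1x a1, a2, a3, a4⟩
    · -- decoder correctness
      rintro u w hu hw
      by_cases huc : u ∈ subFin F c <;> by_cases hwc : w ∈ subFin F c
      · simp only [if_pos huc, if_pos hwc]
        exact h1I u huc w hwc
      · -- u in c, w in later: unrelated and intervals disjoint
        rcases hw with ⟨c', hc', hw'⟩
        have hc'cs : c' ∈ cs := by
          rcases List.mem_cons.mp hc' with rfl | h
          · exact absurd hw' hwc
          · exact h
        simp only [if_pos huc, if_neg hwc]
        obtain ⟨b1, b2, b3, b4⟩ := h1A u huc
        obtain ⟨a1, a2, a3, a4⟩ := h2A w ⟨c', hc'cs, hw'⟩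
        constructor
        · rintro ⟨-, -, hlt⟩
          exact absurd hlt (by omega)
        · intro hanc
          exact absurd hanc (hcne u w huc ⟨c', hc'cs, hw'⟩).1
      · -- u in later, w in c
        rcases hu with ⟨c', hc', hu'⟩
        have hc'cs : c' ∈ cs := by
          rcases List.mem_cons.mp hc' with rfl | h
          · exact absurd hu' huc
          · exact h
        simp only [if_neg huc, if_pos hwc]
        obtain ⟨b1, b2, b3, b4⟩ := h1A w hwc
        obtain ⟨a1, a2, a3, a4⟩ := h2A u ⟨c', hc'cs, hu'⟩
        constructor
        · rintro ⟨-, hle, -⟩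
          exact absurd hle (by omega)
        · intro hanc
          exact absurd hanc (hcne w u hwc ⟨c', hc'cs, hu'⟩).2
      · -- both later
        rcases hu with ⟨cu, hcu, hu'⟩
        have hcucs : cu ∈ cs := by
          rcases List.mem_cons.mp hcu with rfl | h
          · exact absurd hu' huc
          · exact h
        rcases hw with ⟨cw, hcw, hw'⟩
        have hcwcs : cw ∈ cs := by
          rcases List.mem_cons.mp hcw with rfl | h
          · exact absurd hw' hwc
          · exact h
        simp only [if_neg huc, if_neg hwc]
        exact h2I u w ⟨cu, hcucs, hu'⟩ ⟨cw, hcwcs, hw'⟩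

lemma packStep (F : RootedForest V) (d : ℕ) (hd : 1 ≤ d) (hdall : ∀ v, F.depth v ≤ d)
    (v : V) (hch : ∀ c ∈ childFin F v, PackProp F d c) : PackProp F d v := by
  intro x hx
  have hs1 : 1 ≤ (subFin F v).card :=
    Finset.card_pos.mpr ⟨v, self_mem_subFin v⟩
  set s := (subFin F v).card with hsdef
  set K := (2*d+1)*(2*d+4) with hKdef
  set h := d - F.depth v + 1 with hhdef
  set Tbound := ((s-1) * K^(h-1)) / ((2*d)^(2*(h-1))) with hTdef
  set need := Tbound + 1 with hneeddef
  set lv := alignPos d need x with hlvdef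
  set av := aOf d need with havdef
  set len := lenR d need with hlendef
  clear_value s K h Tbound need lv av len
  have hxlv : x ≤ lv := by rw [hlvdef]; exact le_alignPos
  have hlv1 : 1 ≤ lv := le_trans hx hxlv
  have hlenOfv : lenOf d lv av = len := by
    rw [hlvdef, havdef, hlendef]; exact lenOf_align hd
  have hneed1 : 1 ≤ need := by rw [hneeddef]; omega
  have hlen1 : 1 ≤ len := by rw [hlendef]; exact lenR_pos hneed1
  have hneedlen : need ≤ len := by rw [hlendef]; exact le_lenR
  -- pack the children
  obtain ⟨lab2, out2, h2x, h2q, h2A, h2I⟩ :=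
    packList F d (F.depth v + 1) (childFin F v).toList (Finset.nodup_toList _)
      (fun c hc => child_depth (Finset.mem_toList.mp hc))
      (fun c hc => hch c (Finset.mem_toList.mp hc)) lv hlv1
  have hmemlist : ∀ w, (∃ c ∈ (childFin F v).toList, w ∈ subFin F c) ↔
      (∃ c ∈ childFin F v, w ∈ subFin F c) := by
    intro w
    constructor
    · rintro ⟨c, hc, hw⟩; exact ⟨c, Finset.mem_toList.mp hc, hw⟩
    · rintro ⟨c, hc, hw⟩; exact ⟨c, Finset.mem_toList.mpr hc, hw⟩
  -- the span of the children is at most Tbound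
  have hsum : ((childFin F v).toList.map (fun c => (subFin F c).card)).sum = s - 1 := by
    rw [Finset.sum_map_toList]
    have := card_subFin F v
    omega
  have hT : out2 - lv ≤ Tbound := by
    rcases eq_or_ne (childFin F v) ∅ with hemp | hne
    · have hnil : (childFin F v).toList = [] := by rw [hemp]; simp
      rw [hnil] at h2q
      simp only [List.map_nil, List.sum_nil, Nat.zero_mul] at h2q
      have hpow : 0 < (2*d)^(2*(d - (F.depth v + 1) + 1)) := Nat.pow_pos (n := _) (by omega)
      have h0 : out2 - lv = 0 := by
        by_contra hne0
        have := Nat.mul_pos (Nat.pos_of_ne_zero hne0) hpow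
        omega
      omega
    · obtain ⟨c, hc⟩ := Finset.nonempty_iff_ne_empty.mpr hne
      have hcd : F.depth v + 1 ≤ d := by
        have h1 := child_depth hc
        have h2 := hdall c
        omega
      have hexp : d - (F.depth v + 1) + 1 = h - 1 := by omega
      rw [hexp, hsum] at h2q
      rw [hTdef]
      rw [Nat.le_div_iff_mul_le (Nat.pow_pos (n := _) (by omega))]
      rw [hKdef]
      exact h2q
  have hout2 : out2 ≤ lv + Tbound := by omega
  -- assemble
  refine ⟨fun w => if w = v then (lv, av) else lab2 w, lv + len,
    le_trans hxlv (Nat.le_add_right _ _), ?_, ?_, ?_⟩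
  · -- quantitative bound
    have hq1 : (2*d)^2 * (lv + len - x) ≤ K * need := by
      have hqb := quant_bound (d := d) (x := need) (pos := x) hd
      rw [← hlvdef, ← hlendef, ← hKdef] at hqb
      exact hqb
    have hTb : Tbound * (2*d)^(2*(h-1)) ≤ (s-1) * K^(h-1) := by
      rw [hTdef]; exact Nat.div_mul_le_self _ _
    have hmK : (2*d)^(2*(h-1)) ≤ K^(h-1) := by
      calc (2*d)^(2*(h-1)) = ((2*d)^2)^(h-1) := by rw [← pow_mul]
      _ ≤ K^(h-1) := Nat.pow_le_pow_left (by rw [hKdef]; nlinarith) _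
    have hsplitpow : (2*d)^(2*h) = (2*d)^2 * (2*d)^(2*(h-1)) := by
      rw [← pow_add]; congr 1; omega
    have hKh : K * K^(h-1) = K^h := by
      conv_rhs => rw [show h = h - 1 + 1 by omega]
      rw [pow_succ]; ring
    have heq : (s - 1) * K ^ (h - 1) + K ^ (h - 1) = s * K ^ (h-1) := by
      have h2 : s - 1 + 1 = s := by omega
      calc (s-1) * K^(h-1) + K^(h-1) = ((s-1)+1) * K^(h-1) := by ring
      _ = s * K^(h-1) := by rw [h2]
    calc (lv + len - x) * (2*d)^(2*h)
        = ((2*d)^2 * (lv + len - x)) * (2*d)^(2*(h-1)) := by rw [hsplitpow]; ring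
      _ ≤ (K * need) * (2*d)^(2*(h-1)) := Nat.mul_le_mul_right _ hq1
      _ = K * (Tbound * (2*d)^(2*(h-1)) + (2*d)^(2*(h-1))) := by rw [hneeddef]; ring
      _ ≤ K * ((s-1) * K^(h-1) + K^(h-1)) := Nat.mul_le_mul_left _ (Nat.add_le_add hTb hmK)
      _ = K * (s * K^(h-1)) := by rw [heq]
      _ = s * (K * K^(h-1)) := by ring
      _ = s * K^h := by rw [hKh]
  · -- interval bounds
    intro w hw
    dsimp only
    by_cases hwv : w = v
    · subst hwv
      rw [if_pos rfl]
      refine ⟨hxlv, ?_, ?_, ?_⟩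
      · rw [hlenOfv]
      · rw [hlenOfv]; exact hlen1
      · rw [havdef]; exact aOf_le hd
    · have hw' : ∃ c ∈ (childFin F v).toList, w ∈ subFin F c := by
        rw [hmemlist]
        rcases subFin_decomp_mem.mp hw with rfl | hex
        · exact absurd rfl hwv
        · exact hex
      obtain ⟨a1, a2, a3, a4⟩ := h2A w hw'
      rw [if_neg hwv]
      exact ⟨le_trans hxlv a1, by omega, a3, a4⟩
  · -- decoder correctness
    intro u hu w hw
    dsimp only
    by_cases huv : u = v <;> by_cases hwv : w = v
    · rw [if_pos huv, if_pos hwv]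
      constructor
      · rintro ⟨h1, -, -⟩; rw [huv, hwv] at h1; exact absurd h1 (lt_irrefl _)
      · intro hanc; rw [huv, hwv] at hanc; exact absurd hanc (anc_irrefl F v)
    · rw [if_pos huv, if_neg hwv, huv]
      have hw' : ∃ c ∈ (childFin F v).toList, w ∈ subFin F c := by
        rw [hmemlist]
        rcases subFin_decomp_mem.mp hw with rfl | hex
        · exact absurd rfl hwv
        · exact hex
      obtain ⟨c, hc, hwc⟩ := hw'
      have hanc : F.Ancestor v w := anc_of_child_mem (Finset.mem_toList.mp hc) hwc
      obtain ⟨a1, a2, a3, a4⟩ := h2A w ⟨c, hc, hwc⟩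
      constructor
      · intro _; exact hanc
      · intro _
        refine ⟨depth_lt_of_anc hanc, a1, ?_⟩
        rw [hlenOfv]
        omega
    · rw [if_neg huv, if_pos hwv, hwv]
      have hanc : F.Ancestor v u := anc_of_mem_subFin hu huv
      have hdlt : F.depth v < F.depth u := depth_lt_of_anc hanc
      constructor
      · rintro ⟨h1, -, -⟩; exact absurd h1 (by omega)
      · intro hanc2
        exact absurd (depth_lt_of_anc hanc2) (by omega)
    · rw [if_neg huv, if_neg hwv]
      have hu' : ∃ c ∈ (childFin F v).toList, u ∈ subFin F c := by
        rw [hmemlist]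
        rcases subFin_decomp_mem.mp hu with rfl | hex
        · exact absurd rfl huv
        · exact hex
      have hw' : ∃ c ∈ (childFin F v).toList, w ∈ subFin F c := by
        rw [hmemlist]
        rcases subFin_decomp_mem.mp hw with rfl | hex
        · exact absurd rfl hwv
        · exact hex
      exact h2I u w hu' hw'

lemma packAll (F : RootedForest V) (d : ℕ) (hd : 1 ≤ d) (hdall : ∀ v, F.depth v ≤ d) :
    ∀ (t : ℕ) (v : V), d - F.depth v < t → PackProp F d v := by
  intro t
  induction t with
  | zero => intro v hv; exact absurd hv (Nat.not_lt_zero _)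
  | succ t ih =>
    intro v hv
    apply packStep F d hd hdall v
    intro c hc
    apply ih
    have h1 := child_depth hc
    have h2 := hdall c
    omega

end AncAux

/-- There is an ancestry labeling scheme for the family `F(n,d)` of rooted forests
with at most `n` nodes and depth at most `d`, with labels drawn from a set of size
`O(n·d²)` (i.e. label size `log₂ n + 2 log₂ d + O(1)` bits): a label set
`{0, …, Usz-1}` and a decoder `D`, independent of the forest, such that every
forest in `F(n,d)` admits a labeling on which `D` answers exactly the
strict-ancestry queries. -/
theorem ancestry_labeling_scheme :
    ∃ C : ℕ, 0 < C ∧ ∀ n d : ℕ, 1 ≤ d →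
      ∃ (Usz : ℕ) (D : ℕ → ℕ → Bool), Usz ≤ C * n * d ^ 2 ∧
        ∀ (V : Type) [Fintype V] (F : RootedForest V),
          Fintype.card V ≤ n → (∀ v, F.depth v ≤ d) →
          ∃ L : V → ℕ, (∀ v, L v < Usz) ∧
            ∀ u v : V, (D (L u) (L v) = true ↔ F.Ancestor u v) := by
  classical
  refine ⟨1000, by norm_num, ?_⟩
  intro n d hd
  refine ⟨1000 * n * d^2,
    fun c c' => decide
      ((c / (4*d+1)) % d < (c' / (4*d+1)) % d ∧
       (c / (4*d+1)) / d ≤ (c' / (4*d+1)) / d ∧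
       (c' / (4*d+1)) / d < (c / (4*d+1)) / d +
         AncAux.lenOf d ((c / (4*d+1)) / d) (c % (4*d+1))),
    le_rfl, ?_⟩
  intro V _ F hcard hdepth
  obtain ⟨lab, out, hxout, hq, hA, hI⟩ :=
    AncAux.packList F d 1 (AncAux.rootsFin F).toList (Finset.nodup_toList _)
      (fun r hr => AncAux.root_depth (Finset.mem_toList.mp hr))
      (fun r hr => AncAux.packAll F d hd hdepth (d+1) r (by omega)) 1 le_rfl
  have hcover : ∀ w : V, ∃ r ∈ (AncAux.rootsFin F).toList, w ∈ AncAux.subFin F r := by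
    intro w
    obtain ⟨r, hr, hw⟩ := AncAux.exists_root F (F.depth w) w le_rfl
    exact ⟨r, Finset.mem_toList.mpr hr, hw⟩
  have hsum : ((AncAux.rootsFin F).toList.map (fun r => (AncAux.subFin F r).card)).sum
      = Fintype.card V := by
    rw [Finset.sum_map_toList]; exact AncAux.sum_card_roots F
  have hexp : d - 1 + 1 = d := by omega
  rw [hexp, hsum] at hq
  have hout : out ≤ 55 * n + 1 := by
    have h55 : Fintype.card V * ((2*d+1)*(2*d+4))^d ≤ (55 * n) * (2*d)^(2*d) := by
      calc Fintype.card V * ((2*d+1)*(2*d+4))^d ≤ n * (55 * (2*d)^(2*d)) :=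
        Nat.mul_le_mul hcard (AncAux.pow_bound hd)
      _ = (55 * n) * (2*d)^(2*d) := by ring
    have hq2 : (out - 1) * (2*d)^(2*d) ≤ (55*n) * (2*d)^(2*d) := le_trans hq h55
    have hpow : 0 < (2*d)^(2*d) := Nat.pow_pos (n := _) (by omega)
    have := Nat.le_of_mul_le_mul_right hq2 hpow
    omega
  -- decoding of the labels
  have hdec : ∀ v : V,
      ((lab v).2 + (4*d+1) * ((F.depth v - 1) + d * (lab v).1)) % (4*d+1) = (lab v).2 ∧
      ((((lab v).2 + (4*d+1) * ((F.depth v - 1) + d * (lab v).1)) / (4*d+1)) % d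
        = F.depth v - 1) ∧
      ((((lab v).2 + (4*d+1) * ((F.depth v - 1) + d * (lab v).1)) / (4*d+1)) / d
        = (lab v).1) := by
    intro v
    obtain ⟨a1, a2, a3, a4⟩ := hA v (hcover v)
    have h1 : (lab v).2 < 4*d+1 := by omega
    have hdep1 := AncAux.depth_pos F v
    have hdd := hdepth v
    have e2 : ((lab v).2 + (4*d+1) * ((F.depth v - 1) + d * (lab v).1)) / (4*d+1)
        = (F.depth v - 1) + d * (lab v).1 := by
      rw [Nat.add_mul_div_left _ _ (by omega : 0 < 4*d+1), Nat.div_eq_of_lt h1, zero_add]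
    refine ⟨?_, ?_, ?_⟩
    · rw [Nat.add_mul_mod_self_left, Nat.mod_eq_of_lt h1]
    · rw [e2, Nat.add_mul_mod_self_left, Nat.mod_eq_of_lt (by omega : F.depth v - 1 < d)]
    · rw [e2, Nat.add_mul_div_left _ _ (by omega : 0 < d),
        Nat.div_eq_of_lt (by omega : F.depth v - 1 < d), zero_add]
  refine ⟨fun v => (lab v).2 + (4*d+1) * ((F.depth v - 1) + d * (lab v).1), ?_, ?_⟩
  · -- the labels are small
    intro v
    have hn1 : 1 ≤ n := le_trans (Fintype.card_pos_iff.mpr ⟨v⟩) hcard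
    obtain ⟨a1, a2, a3, a4⟩ := hA v (hcover v)
    have hdep1 := AncAux.depth_pos F v
    have hdd := hdepth v
    have hl : (lab v).1 ≤ 55 * n := by omega
    have hb1 : (lab v).2 + (4*d+1) * ((F.depth v - 1) + d * (lab v).1)
        ≤ 4*d + (4*d+1) * ((d-1) + d * (55*n)) := by
      have hmul : (4*d+1) * ((F.depth v - 1) + d * (lab v).1)
          ≤ (4*d+1) * ((d-1) + d * (55*n)) :=
        Nat.mul_le_mul_left _ (Nat.add_le_add (by omega) (Nat.mul_le_mul_left _ hl))
      omega
    refine lt_of_le_of_lt hb1 ?_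
    rcases Nat.exists_eq_add_of_le hd with ⟨d', rfl⟩
    have hd1 : 1 + d' - 1 = d' := by omega
    rw [hd1]
    nlinarith [hn1, Nat.zero_le d', Nat.zero_le (n*d'), Nat.zero_le (n*d'*d')]
  · -- correctness of the decoder
    intro u v
    rw [decide_eq_true_eq]
    dsimp only
    obtain ⟨du1, du2, du3⟩ := hdec u
    obtain ⟨dv1, dv2, dv3⟩ := hdec v
    rw [du1, du2, du3, dv2, dv3]
    have hiff := hI u v (hcover u) (hcover v)
    have hpu := AncAux.depth_pos F u
    have hpv := AncAux.depth_pos F v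
    constructor
    · rintro ⟨h1, h2, h3⟩
      exact hiff.mp ⟨by omega, h2, h3⟩
    · intro h
      obtain ⟨h1, h2, h3⟩ := hiff.mpr h
      exact ⟨by omega, h2, h3⟩
end

section
/- For every constant d, there exists a universal graph with O(n) vertices for the family F(n,d) of forests with at most n nodes and depth at most d: a graph U_n with at most C(d)·n vertices such that every forest in F(n,d) is an induced subgraph of U_n. -/
/-- `u` and `v` are adjacent in the rooted forest `F` (one is the parent of the other). -/
def RootedForest.Adjacent {V : Type} [Fintype V] (F : RootedForest V) (u v : V) : Prop :=
  F.parent u = some v ∨ F.parent v = some u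

noncomputable section UnivForest
namespace UnivForest
open Finset
open scoped Classical

variable {V : Type} [Fintype V] (F : RootedForest V)

/-- one parent step -/
def step (F : RootedForest V) (a b : V) : Prop := F.parent a = some b

lemma depth_pos (v : V) : 1 ≤ F.depth v := by
  cases h : F.parent v with
  | none => rw [F.depth_root v h]
  | some u => rw [F.depth_parent v u h]; omega

lemma depth_lt_of_tg {w v : V} (h : Relation.TransGen (step F) w v) :
    F.depth v < F.depth w := by
  induction h with
  | single h => rw [F.depth_parent _ _ h]; omega
  | tail _ h ih => have := F.depth_parent _ _ h; omega

lemma depth_le_of_rtg {w v : V} (h : Relation.ReflTransGen (step F) w v) :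
    F.depth v ≤ F.depth w := by
  rcases Relation.reflTransGen_iff_eq_or_transGen.mp h with rfl | h
  · exact le_rfl
  · exact (depth_lt_of_tg F h).le

lemma step_right_unique : Relator.RightUnique (step F) := by
  intro a b c hb hc
  unfold step at hb hc; rw [hb] at hc; exact Option.some.inj hc

/-- descendants of `v` (including `v`) -/
def desc (v : V) : Finset V :=
  univ.filter (fun w => Relation.ReflTransGen (step F) w v)

lemma mem_desc {w v : V} : w ∈ desc F v ↔ Relation.ReflTransGen (step F) w v := by
  simp [desc]

def sz (v : V) : ℕ := (desc F v).card

lemma self_mem_desc (v : V) : v ∈ desc F v := mem_desc F |>.mpr .refl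

lemma sz_pos (v : V) : 1 ≤ sz F v := card_pos.mpr ⟨v, self_mem_desc F v⟩

lemma sz_le_card (v : V) : sz F v ≤ Fintype.card V := by
  simpa [sz] using card_le_card (desc F v).subset_univ

lemma desc_disjoint {u u' : V} (hdep : F.depth u = F.depth u') (hne : u ≠ u') :
    Disjoint (desc F u) (desc F u') := by
  rw [Finset.disjoint_left]
  intro w hw hw'
  rw [mem_desc] at hw hw'
  rcases Relation.ReflTransGen.total_of_right_unique (step_right_unique F) hw hw' with h | h
  · rcases Relation.reflTransGen_iff_eq_or_transGen.mp h with rfl | h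
    · exact hne rfl
    · exact absurd hdep (by have := depth_lt_of_tg F h; omega)
  · rcases Relation.reflTransGen_iff_eq_or_transGen.mp h with rfl | h
    · exact hne rfl
    · exact absurd hdep (by have := depth_lt_of_tg F h; omega)

/-- children of an optional parent -/
def children (o : Option V) : Finset V := univ.filter (fun w => F.parent w = o)

lemma mem_children {w : V} {o : Option V} : w ∈ children F o ↔ F.parent w = o := by
  simp [children]

lemma depth_of_children {w : V} {o : Option V} (h : w ∈ children F o) :
    F.depth w = (Option.elim o 0 F.depth) + 1 := by
  rw [mem_children] at h
  cases o with
  | none => simpa using F.depth_root w h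
  | some u => simpa using F.depth_parent w u h

lemma desc_subset_of_parent {w u : V} (h : F.parent w = some u) :
    desc F w ⊆ desc F u := by
  intro x hx
  rw [mem_desc] at hx ⊢
  exact hx.tail h

lemma sum_sz_children_some (u : V) :
    (∑ w ∈ children F (some u), sz F w) + 1 ≤ sz F u := by
  have hdisj : ∀ x ∈ children F (some u), ∀ y ∈ children F (some u), x ≠ y →
      Disjoint (desc F x) (desc F y) := by
    intro x hx y hy hxy
    exact desc_disjoint F (by rw [depth_of_children F hx, depth_of_children F hy]) hxy
  have hcard := Finset.card_biUnion hdisj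
  have hsub : (children F (some u)).biUnion (desc F) ⊆ (desc F u).erase u := by
    intro x hx
    rcases Finset.mem_biUnion.mp hx with ⟨w, hw, hxw⟩
    rw [mem_children] at hw
    refine Finset.mem_erase.mpr ⟨?_, desc_subset_of_parent F hw hxw⟩
    rintro rfl
    have h1 := depth_le_of_rtg F ((mem_desc F).mp hxw)
    have h2 := F.depth_parent w _ hw
    omega
  have := Finset.card_le_card hsub
  have herase : ((desc F u).erase u).card = sz F u - 1 := by
    rw [Finset.card_erase_of_mem (self_mem_desc F u)]; rfl
  have := sz_pos F u
  unfold sz at *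
  omega

lemma sum_sz_children_none :
    (∑ w ∈ children F none, sz F w) ≤ Fintype.card V := by
  have hdisj : ∀ x ∈ children F none, ∀ y ∈ children F none, x ≠ y →
      Disjoint (desc F x) (desc F y) := by
    intro x hx y hy hxy
    exact desc_disjoint F (by rw [depth_of_children F hx, depth_of_children F hy]) hxy
  calc (∑ w ∈ children F none, sz F w)
      = ((children F none).biUnion (desc F)).card := (Finset.card_biUnion hdisj).symm
    _ ≤ Fintype.card V := by simpa using card_le_card (subset_univ _)

set_option linter.unusedSectionVars false

variable (d n : ℕ)

/-- exponent of the dyadic interval length of `v` -/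
def ex (v : V) : ℕ := (d - F.depth v) + Nat.clog 2 (sz F v)

/-- interval length of `v` -/
def len (v : V) : ℕ := 2 ^ ex F d v

/-- global resolution exponent -/
def B : ℕ := d + Nat.clog 2 n

def exO (o : Option V) : ℕ := Option.elim o (B d n) (ex F d)

lemma len_pos (v : V) : 0 < len F d v := Nat.pow_pos (by norm_num)

lemma p2_le {s : ℕ} (hs : 1 ≤ s) : 2 ^ Nat.clog 2 s ≤ 2 * s - 1 := by
  rcases Nat.lt_or_ge s 2 with h | h
  · interval_cases s
    · simp [Nat.clog]
  · have h1 : 1 < s := by omega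
    have := Nat.pow_pred_clog_lt_self (by norm_num : 1 < 2) h1
    simp only [Nat.pred_eq_sub_one] at this
    have hc : 1 ≤ Nat.clog 2 s := Nat.clog_pos (by norm_num) h
    have : 2 ^ Nat.clog 2 s = 2 * 2 ^ (Nat.clog 2 s - 1) := by
      rw [← pow_succ']
      congr 1
      omega
    omega

section Bounds
variable (hd : 1 ≤ d) (hn : 1 ≤ n) (hcard : Fintype.card V ≤ n)
    (hdep : ∀ v, F.depth v ≤ d)

include hcard hdep hd hn

lemma ex_lt_exO (v : V) : ex F d v < exO F d n (F.parent v) := by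
  cases h : F.parent v with
  | none =>
    have h1 := F.depth_root v h
    have h2 : Nat.clog 2 (sz F v) ≤ Nat.clog 2 n :=
      Nat.clog_mono_right 2 ((sz_le_card F v).trans hcard)
    simp only [exO, ex, Option.elim, B, h1]
    omega
  | some u =>
    have h1 := F.depth_parent v u h
    have h2 : Nat.clog 2 (sz F v) ≤ Nat.clog 2 (sz F u) :=
      Nat.clog_mono_right 2 (card_le_card (desc_subset_of_parent F h))
    have h3 := hdep v
    simp only [exO, ex, Option.elim]
    omega

lemma ex_le_B (v : V) : ex F d v ≤ B d n := by
  have h2 : Nat.clog 2 (sz F v) ≤ Nat.clog 2 n :=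
    Nat.clog_mono_right 2 ((sz_le_card F v).trans hcard)
  have := depth_pos F v
  simp only [ex, B]
  omega

/-- the packing bound: children's interval lengths fit in the parent's. -/
lemma sum_len_children (o : Option V) :
    (∑ w ∈ children F o, len F d w) ≤ 2 ^ exO F d n o := by
  classical
  have key : ∀ w ∈ children F o, len F d w
      = 2 ^ (d - (Option.elim o 0 F.depth + 1)) * 2 ^ Nat.clog 2 (sz F w) := by
    intro w hw
    rw [len, ex, depth_of_children F hw, pow_add]
  rcases Nat.lt_or_ge (Option.elim o 0 F.depth) d with hlt | hge
  · rw [Finset.sum_congr rfl key, ← Finset.mul_sum]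
    have hsum : (∑ w ∈ children F o, 2 ^ Nat.clog 2 (sz F w))
        ≤ 2 * ∑ w ∈ children F o, sz F w := by
      calc (∑ w ∈ children F o, 2 ^ Nat.clog 2 (sz F w))
          ≤ ∑ w ∈ children F o, 2 * sz F w := by
            refine Finset.sum_le_sum ?_
            intro w _
            have := p2_le (sz_pos F w)
            omega
        _ = 2 * ∑ w ∈ children F o, sz F w := by rw [Finset.mul_sum]
    cases o with
    | none =>
      have hsz := sum_sz_children_none F
      have : (∑ w ∈ children F none, 2 ^ Nat.clog 2 (sz F w)) ≤ 2 * n := by omega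
      calc 2 ^ (d - (Option.elim (none : Option V) 0 F.depth + 1))
            * ∑ w ∈ children F none, 2 ^ Nat.clog 2 (sz F w)
          ≤ 2 ^ (d - 1) * (2 * n) := by
            exact Nat.mul_le_mul (by simp) this
        _ = 2 ^ d * n := by
            rw [show 2 ^ (d-1) * (2 * n) = (2 ^ (d-1) * 2) * n by ring, ← pow_succ]
            congr 2
            omega
        _ ≤ 2 ^ d * 2 ^ Nat.clog 2 n :=
            Nat.mul_le_mul_left _ (Nat.le_pow_clog (by norm_num) n)
        _ = 2 ^ exO F d n (none : Option V) := by
            simp [exO, B, pow_add]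
    | some u =>
      have hsz := sum_sz_children_some F u
      have h1 : (∑ w ∈ children F (some u), 2 ^ Nat.clog 2 (sz F w))
          ≤ 2 * sz F u - 2 := by omega
      have h2 : sz F u ≤ 2 ^ Nat.clog 2 (sz F u) := Nat.le_pow_clog (by norm_num) _
      calc 2 ^ (d - (Option.elim (some u) 0 F.depth + 1))
            * ∑ w ∈ children F (some u), 2 ^ Nat.clog 2 (sz F w)
          ≤ 2 ^ (d - (F.depth u + 1)) * (2 * sz F u) := by
            refine Nat.mul_le_mul (by simp) ?_
            omega
        _ = 2 ^ (d - (F.depth u + 1)) * 2 * sz F u := by ring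
        _ ≤ 2 ^ (d - F.depth u) * sz F u := by
            refine Nat.mul_le_mul_right _ ?_
            rw [← pow_succ]
            refine Nat.pow_le_pow_right (by norm_num) ?_
            simp only [Option.elim] at hlt
            omega
        _ ≤ 2 ^ (d - F.depth u) * 2 ^ Nat.clog 2 (sz F u) := Nat.mul_le_mul_left _ h2
        _ = 2 ^ exO F d n (some u) := by simp [exO, ex, pow_add]
  · have hempty : children F o = ∅ := by
      rw [Finset.eq_empty_iff_forall_notMem]
      intro w hw
      have := depth_of_children F hw
      have := hdep w
      omega
    simp [hempty]

end Bounds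

/-- a fixed enumeration used to break ties between siblings -/
def idx (v : V) : ℕ := ((Fintype.equivFin V) v : ℕ)

lemma idx_inj {v w : V} (h : idx v = idx w) : v = w := by
  have := Fin.val_injective h
  exact (Fintype.equivFin V).injective this

/-- `ord w v` : `w` comes before `v` among siblings (longer intervals first). -/
def ord (w v : V) : Prop :=
  ex F d v < ex F d w ∨ (ex F d w = ex F d v ∧ idx w < idx v)

lemma ord_irrefl (v : V) : ¬ ord F d v v := by
  simp [ord]

lemma ord_trans {a b c : V} (h1 : ord F d a b) (h2 : ord F d b c) : ord F d a c := by
  rcases h1 with h1 | ⟨h1, h1'⟩ <;> rcases h2 with h2 | ⟨h2, h2'⟩ <;>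
    simp only [ord] <;> omega

lemma ord_total {v w : V} (h : v ≠ w) : ord F d v w ∨ ord F d w v := by
  have : idx v ≠ idx w := fun hc => h (idx_inj hc)
  simp only [ord]
  omega

lemma ex_le_of_ord {w v : V} (h : ord F d w v) : ex F d v ≤ ex F d w := by
  rcases h with h | ⟨h, _⟩ <;> omega

/-- the position (left endpoint) of the dyadic interval of `v` -/
def pos (v : V) : ℕ :=
  (match h : F.parent v with
   | none => 0
   | some u => pos u)
  + ∑ w ∈ (children F (F.parent v)).filter (fun w => ord F d w v), len F d w
termination_by F.depth v
decreasing_by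
  have := F.depth_parent v u h
  omega

def posO (o : Option V) : ℕ := Option.elim o 0 (pos F d)

/-- the binary code of the interval of `v` -/
def code (v : V) : ℕ := (2 ^ B d n + pos F d v) / len F d v

/-- strict-prefix relation on codes -/
def spre (a b : ℕ) : Prop :=
  Nat.log 2 a < Nat.log 2 b ∧ b / 2 ^ (Nat.log 2 b - Nat.log 2 a) = a

lemma pos_def (v : V) : pos F d v
    = posO F d (F.parent v)
      + ∑ w ∈ (children F (F.parent v)).filter (fun w => ord F d w v), len F d w := by
  rw [pos]
  cases h : F.parent v <;> simp [posO, h]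

lemma posO_le_pos (v : V) : posO F d (F.parent v) ≤ pos F d v := by
  rw [pos_def]; exact Nat.le_add_right _ _

lemma self_mem_children (v : V) : v ∈ children F (F.parent v) :=
  (mem_children F).mpr rfl

lemma insert_filter_subset {v v' : V} (hp : F.parent v = F.parent v')
    (ho : ord F d v v') :
    insert v ((children F (F.parent v')).filter (fun w => ord F d w v))
      ⊆ (children F (F.parent v')).filter (fun w => ord F d w v') := by
  intro w hw
  rcases Finset.mem_insert.mp hw with rfl | hw
  · rw [Finset.mem_filter]
    exact ⟨hp ▸ self_mem_children F w, ho⟩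
  · rw [Finset.mem_filter] at hw ⊢
    exact ⟨hw.1, ord_trans F d hw.2 ho⟩

lemma sum_insert_le (s : Finset V) (v : V) :
    (∑ w ∈ s.filter (fun w => ord F d w v), len F d w) + len F d v
    = ∑ w ∈ insert v (s.filter (fun w => ord F d w v)), len F d w := by
  rw [Finset.sum_insert (by simp [ord_irrefl])]
  ring

lemma sibling_disjoint {v v' : V} (hp : F.parent v = F.parent v')
    (ho : ord F d v v') : pos F d v + len F d v ≤ pos F d v' := by
  rw [pos_def F d v, pos_def F d v', hp, add_assoc]
  refine Nat.add_le_add_left ?_ _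
  rw [sum_insert_le]
  exact Finset.sum_le_sum_of_subset (insert_filter_subset F d hp ho)

section Main
variable (hd : 1 ≤ d) (hn : 1 ≤ n) (hcard : Fintype.card V ≤ n)
    (hdep : ∀ v, F.depth v ≤ d)

include hcard hdep hd hn

lemma ex_lt_of_parent {v u : V} (h : F.parent v = some u) :
    ex F d v < ex F d u := by
  have := ex_lt_exO F d n hd hn hcard hdep v
  rw [h] at this
  exact this

lemma pos_add_len_le (v : V) :
    pos F d v + len F d v ≤ posO F d (F.parent v) + 2 ^ exO F d n (F.parent v) := by
  rw [pos_def, add_assoc]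
  refine Nat.add_le_add_left ?_ _
  rw [sum_insert_le]
  refine le_trans (Finset.sum_le_sum_of_subset ?_) (sum_len_children F d n hd hn hcard hdep _)
  intro w hw
  rcases Finset.mem_insert.mp hw with rfl | hw
  · exact self_mem_children F w
  · exact Finset.mem_filter.mp hw |>.1

lemma len_dvd_pos : ∀ k, ∀ v : V, F.depth v ≤ k → len F d v ∣ pos F d v := by
  intro k
  induction k with
  | zero => intro v hv; have := depth_pos F v; omega
  | succ k ih =>
    intro v hv
    rw [pos_def]
    refine dvd_add ?_ (Finset.dvd_sum ?_)
    · cases h : F.parent v with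
      | none => simp [posO]
      | some u =>
        simp only [posO, Option.elim]
        have h1 : len F d v ∣ len F d u :=
          pow_dvd_pow 2 (ex_lt_of_parent F d n hd hn hcard hdep h).le
        have h2 := F.depth_parent v u h
        exact h1.trans (ih u (by omega))
    · intro w hw
      exact pow_dvd_pow 2 (ex_le_of_ord F d (Finset.mem_filter.mp hw).2)

lemma pos_add_len_le_global : ∀ k, ∀ v : V, F.depth v ≤ k →
    pos F d v + len F d v ≤ 2 ^ B d n := by
  intro k
  induction k with
  | zero => intro v hv; have := depth_pos F v; omega
  | succ k ih =>
    intro v hv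
    have h1 := pos_add_len_le F d n hd hn hcard hdep v
    cases h : F.parent v with
    | none => rw [h] at h1; simpa [posO, exO] using h1
    | some u =>
      rw [h] at h1
      simp only [posO, exO, Option.elim] at h1
      have h2 := F.depth_parent v u h
      have h3 := ih u (by omega)
      rw [← len] at h1
      omega

lemma interval_in_parent {v u : V} (h : F.parent v = some u) :
    pos F d u ≤ pos F d v ∧ pos F d v + len F d v ≤ pos F d u + len F d u := by
  have h1 := posO_le_pos F d v
  have h2 := pos_add_len_le F d n hd hn hcard hdep v
  rw [h] at h1 h2
  simp only [posO, exO, Option.elim] at h1 h2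
  rw [← len] at h2
  exact ⟨h1, h2⟩

lemma disjoint_of_same_depth : ∀ k, ∀ v v' : V, F.depth v ≤ k →
    F.depth v = F.depth v' → v ≠ v' →
    pos F d v + len F d v ≤ pos F d v' ∨ pos F d v' + len F d v' ≤ pos F d v := by
  intro k
  induction k with
  | zero => intro v v' hv; have := depth_pos F v; omega
  | succ k ih =>
    intro v v' hk hdd hne
    by_cases hp : F.parent v = F.parent v'
    · rcases ord_total F d hne with h | h
      · exact Or.inl (sibling_disjoint F d hp h)
      · exact Or.inr (sibling_disjoint F d hp.symm h)
    · cases h : F.parent v with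
      | none =>
        cases h' : F.parent v' with
        | none => exact absurd (h.trans h'.symm) hp
        | some p' =>
          have := F.depth_root v h
          have := F.depth_parent v' p' h'
          have := depth_pos F p'
          omega
      | some p =>
        cases h' : F.parent v' with
        | none =>
          have := F.depth_root v' h'
          have := F.depth_parent v p h
          have := depth_pos F p
          omega
        | some p' =>
          have hpp : p ≠ p' := by
            rintro rfl
            exact hp (h.trans h'.symm)
          have e1 := F.depth_parent v p h
          have e2 := F.depth_parent v' p' h'
          have c1 := interval_in_parent F d n hd hn hcard hdep h
          have c2 := interval_in_parent F d n hd hn hcard hdep h'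
          have hdisj := ih p p' (by omega) (by omega) hpp
          omega

omit hd hn hcard hdep in
lemma div_eq_iff_of_pos {b c a : ℕ} (hb : 0 < b) :
    a / b = c ↔ c * b ≤ a ∧ a < (c + 1) * b := by
  constructor
  · rintro rfl
    exact ⟨Nat.div_mul_le_self _ _, (Nat.div_lt_iff_lt_mul hb).mp (Nat.lt_succ_self _)⟩
  · rintro ⟨h1, h2⟩
    have l1 : c ≤ a / b := (Nat.le_div_iff_mul_le hb).mpr h1
    have l2 : a / b < c + 1 := (Nat.div_lt_iff_lt_mul hb).mpr h2
    omega

lemma len_dvd_code_num (v : V) :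
    len F d v ∣ 2 ^ B d n + pos F d v :=
  dvd_add (pow_dvd_pow 2 (ex_le_B F d n hd hn hcard hdep v))
    (len_dvd_pos F d n hd hn hcard hdep (F.depth v) v le_rfl)

lemma code_mul (v : V) :
    code F d n v * len F d v = 2 ^ B d n + pos F d v :=
  Nat.div_mul_cancel (len_dvd_code_num F d n hd hn hcard hdep v)

lemma pos_lt (v : V) : pos F d v + len F d v ≤ 2 ^ B d n :=
  pos_add_len_le_global F d n hd hn hcard hdep (F.depth v) v le_rfl

lemma code_lower (v : V) : 2 ^ (B d n - ex F d v) ≤ code F d n v := by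
  have h1 := code_mul F d n hd hn hcard hdep v
  have hex := ex_le_B F d n hd hn hcard hdep v
  have h2 : 2 ^ (B d n - ex F d v) * len F d v = 2 ^ B d n := by
    rw [len, ← pow_add]
    congr 1
    omega
  refine Nat.le_of_mul_le_mul_right ?_ (len_pos F d v)
  rw [h1, h2]
  omega

lemma code_upper (v : V) : code F d n v < 2 ^ (B d n - ex F d v + 1) := by
  have h1 := code_mul F d n hd hn hcard hdep v
  have hex := ex_le_B F d n hd hn hcard hdep v
  have hg := pos_lt F d n hd hn hcard hdep v
  have hlp := len_pos F d v
  have h2 : 2 ^ (B d n - ex F d v + 1) * len F d v = 2 ^ (B d n + 1) := by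
    rw [len, ← pow_add]
    congr 1
    omega
  refine Nat.lt_of_mul_lt_mul_right (a := len F d v) ?_
  rw [h1, h2]
  have : (2:ℕ) ^ (B d n + 1) = 2 ^ B d n + 2 ^ B d n := by ring
  omega

lemma log_code (v : V) : Nat.log 2 (code F d n v) = B d n - ex F d v :=
  Nat.log_eq_of_pow_le_of_lt_pow (code_lower F d n hd hn hcard hdep v)
    (code_upper F d n hd hn hcard hdep v)

lemma code_lt (v : V) : code F d n v < 2 ^ (B d n + 1) := by
  have := code_upper F d n hd hn hcard hdep v
  have h2 : (2:ℕ) ^ (B d n - ex F d v + 1) ≤ 2 ^ (B d n + 1) :=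
    Nat.pow_le_pow_right (by norm_num) (by omega)
  omega

lemma spre_iff (u v : V) :
    spre (code F d n u) (code F d n v) ↔
      ex F d v < ex F d u ∧ pos F d u ≤ pos F d v
        ∧ pos F d v < pos F d u + len F d u := by
  have hu := ex_le_B F d n hd hn hcard hdep u
  have hv := ex_le_B F d n hd hn hcard hdep v
  rw [spre, log_code F d n hd hn hcard hdep, log_code F d n hd hn hcard hdep]
  constructor
  · rintro ⟨h1, h2⟩
    have hlt : ex F d v < ex F d u := by omega
    refine ⟨hlt, ?_⟩
    have hdd : code F d n v / 2 ^ (B d n - ex F d v - (B d n - ex F d u))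
        = (2 ^ B d n + pos F d v) / len F d u := by
      rw [code, Nat.div_div_eq_div_mul, len, len, ← pow_add]
      congr 2
      omega
    rw [hdd] at h2
    rw [div_eq_iff_of_pos (len_pos F d u)] at h2
    have hcm := code_mul F d n hd hn hcard hdep u
    rcases h2 with ⟨h2a, h2b⟩
    rw [hcm] at h2a
    have h2b' : 2 ^ B d n + pos F d v < 2 ^ B d n + pos F d u + len F d u := by
      calc 2 ^ B d n + pos F d v < (code F d n u + 1) * len F d u := h2b
        _ = code F d n u * len F d u + len F d u := by ring
        _ = 2 ^ B d n + pos F d u + len F d u := by rw [hcm]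
    omega
  · rintro ⟨hlt, h2, h3⟩
    refine ⟨by omega, ?_⟩
    have hdd : code F d n v / 2 ^ (B d n - ex F d v - (B d n - ex F d u))
        = (2 ^ B d n + pos F d v) / len F d u := by
      rw [code, Nat.div_div_eq_div_mul, len, len, ← pow_add]
      congr 2
      omega
    rw [hdd, div_eq_iff_of_pos (len_pos F d u)]
    have hcm := code_mul F d n hd hn hcard hdep u
    constructor
    · rw [hcm]; omega
    · calc 2 ^ B d n + pos F d v < 2 ^ B d n + pos F d u + len F d u := by omega
        _ = code F d n u * len F d u + len F d u := by rw [hcm]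
        _ = (code F d n u + 1) * len F d u := by ring

lemma spre_parent {v u : V} (h : F.parent v = some u) :
    spre (code F d n u) (code F d n v) := by
  rw [spre_iff F d n hd hn hcard hdep]
  have h1 := ex_lt_of_parent F d n hd hn hcard hdep h
  have h2 := interval_in_parent F d n hd hn hcard hdep h
  have := len_pos F d v
  exact ⟨h1, h2.1, by omega⟩

lemma spre_to_parent {u v : V} (hdd : F.depth v = F.depth u + 1)
    (h : spre (code F d n u) (code F d n v)) : F.parent v = some u := by
  cases hp : F.parent v with
  | none =>
    have := F.depth_root v hp
    have := depth_pos F u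
    omega
  | some p =>
    have hu := F.depth_parent v p hp
    rcases eq_or_ne p u with rfl | hne
    · rfl
    · exfalso
      have h1 := (spre_iff F d n hd hn hcard hdep u v).mp h
      have h2 := (spre_iff F d n hd hn hcard hdep p v).mp
        (spre_parent F d n hd hn hcard hdep hp)
      have hdisj := disjoint_of_same_depth F d n hd hn hcard hdep (F.depth p) p u
        le_rfl (by omega) hne
      omega

lemma code_inj {u v : V} (hdd : F.depth u = F.depth v)
    (h : code F d n u = code F d n v) : u = v := by
  by_contra hne
  have hl : ex F d u = ex F d v := by
    have h1 := log_code F d n hd hn hcard hdep u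
    have h2 := log_code F d n hd hn hcard hdep v
    have hu := ex_le_B F d n hd hn hcard hdep u
    have hv := ex_le_B F d n hd hn hcard hdep v
    rw [h] at h1
    omega
  have hlen : len F d u = len F d v := by rw [len, len, hl]
  have hpos : pos F d u = pos F d v := by
    have h1 := code_mul F d n hd hn hcard hdep u
    have h2 := code_mul F d n hd hn hcard hdep v
    rw [h, hlen] at h1
    omega
  have hdisj := disjoint_of_same_depth F d n hd hn hcard hdep (F.depth u) u v
    le_rfl hdd hne
  have := len_pos F d u
  have := len_pos F d v
  omega

end Main

end UnivForest

namespace UnivForest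

/-- adjacency on encoded pairs `(level, code)` -/
def adjRel (Bn : ℕ) (x y : ℕ) : Prop :=
  (x / 2 ^ (Bn + 1) + 1 = y / 2 ^ (Bn + 1)
      ∧ spre (x % 2 ^ (Bn + 1)) (y % 2 ^ (Bn + 1)))
  ∨ (y / 2 ^ (Bn + 1) + 1 = x / 2 ^ (Bn + 1)
      ∧ spre (y % 2 ^ (Bn + 1)) (x % 2 ^ (Bn + 1)))

/-- the universal graph -/
def UG (Bn N : ℕ) : SimpleGraph (Fin N) where
  Adj a b := adjRel Bn a.val b.val
  symm := by
    constructor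
    intro a b h
    rcases h with h | h
    · exact Or.inr h
    · exact Or.inl h
  loopless := by
    constructor
    intro a h
    rcases h with ⟨h, _⟩ | ⟨h, _⟩ <;> omega

end UnivForest
end UnivForest

/-- For every constant `d` there is a constant `C(d)` such that, for every `n`,
there is a universal graph on at most `C(d)·n` vertices for the family `F(n,d)`:
every rooted forest with at most `n` nodes and depth at most `d`, viewed as an
undirected graph via its parent-child edges, embeds as an induced subgraph. -/
theorem universal_graph_for_bounded_depth_forests (d : ℕ) (hd : 1 ≤ d) :
    ∃ C : ℕ, 0 < C ∧ ∀ n : ℕ,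
      ∃ (N : ℕ) (U : SimpleGraph (Fin N)), N ≤ C * n ∧
        ∀ (V : Type) [Fintype V] (F : RootedForest V),
          Fintype.card V ≤ n → (∀ v, F.depth v ≤ d) →
          ∃ φ : V → Fin N, Function.Injective φ ∧
            ∀ u v : V, F.Adjacent u v ↔ U.Adj (φ u) (φ v) := by
  classical
  refine ⟨d * 2 ^ (d + 2), by positivity, ?_⟩
  intro n
  rcases Nat.eq_zero_or_pos n with rfl | hn
  · refine ⟨0, ⊥, le_rfl, ?_⟩
    intro V _ F hcV hdep
    have hVempty : IsEmpty V := Fintype.card_eq_zero_iff.mp (Nat.le_zero.mp hcV)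
    exact ⟨fun v => (hVempty.false v).elim, fun a => (hVempty.false a).elim,
      fun u => (hVempty.false u).elim⟩
  · refine ⟨d * 2 ^ (UnivForest.B d n + 1), UnivForest.UG (UnivForest.B d n) _, ?_, ?_⟩
    · -- size bound
      have h1 : (2:ℕ) ^ Nat.clog 2 n ≤ 2 * n := by
        have := UnivForest.p2_le hn
        omega
      calc d * 2 ^ (UnivForest.B d n + 1)
            = d * (2 ^ (d + 1) * 2 ^ Nat.clog 2 n) := by
            rw [UnivForest.B, ← pow_add]
            ring_nf
        _ ≤ d * (2 ^ (d + 1) * (2 * n)) :=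
            Nat.mul_le_mul_left _ (Nat.mul_le_mul_left _ h1)
        _ = d * 2 ^ (d + 2) * n := by ring
    · intro V _ F hcV hdep
      have hφbound : ∀ v : V,
          UnivForest.code F d n v + 2 ^ (UnivForest.B d n + 1) * (F.depth v - 1)
            < d * 2 ^ (UnivForest.B d n + 1) := by
        intro v
        have hc := UnivForest.code_lt F d n hd hn hcV hdep v
        have hdp := UnivForest.depth_pos F v
        have hdl := hdep v
        have hk : F.depth v - 1 + 1 = F.depth v := by omega
        calc UnivForest.code F d n v + 2 ^ (UnivForest.B d n + 1) * (F.depth v - 1)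
            < 2 ^ (UnivForest.B d n + 1)
              + 2 ^ (UnivForest.B d n + 1) * (F.depth v - 1) := by omega
          _ = 2 ^ (UnivForest.B d n + 1) * (F.depth v - 1 + 1) := by ring
          _ = 2 ^ (UnivForest.B d n + 1) * F.depth v := by rw [hk]
          _ ≤ 2 ^ (UnivForest.B d n + 1) * d := Nat.mul_le_mul_left _ hdl
          _ = d * 2 ^ (UnivForest.B d n + 1) := by ring
      set φ : V → Fin (d * 2 ^ (UnivForest.B d n + 1)) :=
        fun v => ⟨UnivForest.code F d n v
          + 2 ^ (UnivForest.B d n + 1) * (F.depth v - 1), hφbound v⟩ with hφ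
      have hdiv : ∀ v : V, (φ v : ℕ) / 2 ^ (UnivForest.B d n + 1) = F.depth v - 1 := by
        intro v
        have hc := UnivForest.code_lt F d n hd hn hcV hdep v
        rw [hφ]
        simp only
        rw [Nat.add_mul_div_left _ _ (by positivity), Nat.div_eq_of_lt hc]
        omega
      have hmod : ∀ v : V, (φ v : ℕ) % 2 ^ (UnivForest.B d n + 1)
          = UnivForest.code F d n v := by
        intro v
        have hc := UnivForest.code_lt F d n hd hn hcV hdep v
        rw [hφ]
        simp only
        rw [Nat.add_mul_mod_self_left, Nat.mod_eq_of_lt hc]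
      refine ⟨φ, ?_, ?_⟩
      · intro u v huv
        have h1 : (φ u : ℕ) = (φ v : ℕ) := by rw [huv]
        have h2 : F.depth u - 1 = F.depth v - 1 := by
          rw [← hdiv u, ← hdiv v, h1]
        have h3 : UnivForest.code F d n u = UnivForest.code F d n v := by
          rw [← hmod u, ← hmod v, h1]
        have hdu := UnivForest.depth_pos F u
        have hdv := UnivForest.depth_pos F v
        exact UnivForest.code_inj F d n hd hn hcV hdep (by omega) h3
      · intro u v
        have hadj : (UnivForest.UG (UnivForest.B d n)
              (d * 2 ^ (UnivForest.B d n + 1))).Adj (φ u) (φ v)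
            ↔ UnivForest.adjRel (UnivForest.B d n) (φ u : ℕ) (φ v : ℕ) := Iff.rfl
        rw [hadj, UnivForest.adjRel, hdiv u, hdiv v, hmod u, hmod v]
        have hdu := UnivForest.depth_pos F u
        have hdv := UnivForest.depth_pos F v
        constructor
        · rintro (h | h)
          · have hdd := F.depth_parent u v h
            exact Or.inr ⟨by omega, UnivForest.spre_parent F d n hd hn hcV hdep h⟩
          · have hdd := F.depth_parent v u h
            exact Or.inl ⟨by omega, UnivForest.spre_parent F d n hd hn hcV hdep h⟩
        · rintro (⟨h1, h2⟩ | ⟨h1, h2⟩)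
          · exact Or.inr (UnivForest.spre_to_parent F d n hd hn hcV hdep
              (by omega) h2)
          · exact Or.inl (UnivForest.spre_to_parent F d n hd hn hcV hdep
              (by omega) h2)
end
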